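/- arXiv:0811.3390 — 5 statements merged into one kernel-verified Lean document; each statement's English description precedes it below -/
import Mathlib

section
/- Let a and b be coprime integers with 0 < a < b, let ε ∈ ℂ with ε ≠ 0, suppose β = a·n₁ + b·n₂ for some n₁, n₂ ∈ ℕ, and let s be a real number with 1 ≤ s < b/a. Then the ℂ-vector space {f ∈ ℂ[[t₁,x₂]] : f is Gevrey of order s, P f = 0 and E_p f = 0} has dimension 1, and every element of it is a polynomial (has finite support). -/
noncomputable section

abbrev M2 : Type := MvPowerSeries (Fin 2) ℂ

/-- Coefficient `f_{(i,j)}` of a formal power series `f ∈ ℂ[[x₁,x₂]]`. -/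
def co (f : M2) (i j : ℕ) : ℂ :=
  MvPowerSeries.coeff (Finsupp.single (0 : Fin 2) i + Finsupp.single (1 : Fin 2) j) f

/-- A coefficient family `F` is Gevrey of order `s` along `x₂ = 0`:
`|F i j| ≤ C·R^(i+j)·(j!)^(s-1)` for some `C, R > 0`. -/
def GevreyFn (s : ℝ) (F : ℕ → ℕ → ℂ) : Prop :=
  ∃ C R : ℝ, 0 < C ∧ 0 < R ∧
    ∀ i j : ℕ, ‖F i j‖ ≤ C * R ^ (i + j) * (j.factorial : ℝ) ^ (s - 1)

/-- A coefficient family is convergent iff it is Gevrey of order `1`, i.e.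
`|F i j| ≤ C·R^(i+j)` for some `C, R > 0`. -/
def ConvFn (F : ℕ → ℕ → ℂ) : Prop := GevreyFn 1 F

/-- Coefficients of `P f` where `P = ∂₁^b - ∂₂^a`:
`(P f)_{(i,j)} = ((i+b)!/i!)·f_{(i+b,j)} - ((j+a)!/j!)·f_{(i,j+a)}`. -/
def Pco (a b : ℕ) (f : M2) (i j : ℕ) : ℂ :=
  (((i + b).factorial / i.factorial : ℕ) : ℂ) * co f (i + b) j
    - (((j + a).factorial / j.factorial : ℕ) : ℂ) * co f i (j + a)

/-- Coefficients of `E f` where `E = a·x₁∂₁ + b·x₂∂₂ - β`: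
`(E f)_{(i,j)} = (a·i + b·j - β)·f_{(i,j)}`. -/
def Eco (a b : ℕ) (β : ℂ) (f : M2) (i j : ℕ) : ℂ :=
  (((a * i + b * j : ℕ) : ℂ) - β) * co f i j

/-- Coefficients of `E_p f` where `E_p = a·(t₁+ε)∂₁ + b·x₂∂₂ - β`:
`(E_p f)_{(i,j)} = (a·i + b·j - β)·f_{(i,j)} + a·ε·(i+1)·f_{(i+1,j)}`. -/
def Epco (a b : ℕ) (β ε : ℂ) (f : M2) (i j : ℕ) : ℂ :=
  (((a * i + b * j : ℕ) : ℂ) - β) * co f i j + (a : ℂ) * ε * ((i : ℂ) + 1) * co f (i + 1) j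

lemma co_add (f g : M2) (i j : ℕ) : co (f + g) i j = co f i j + co g i j := by simp [co]

lemma co_smul (c : ℂ) (f : M2) (i j : ℕ) : co (c • f) i j = c * co f i j := by simp [co]

lemma co_zero (i j : ℕ) : co (0 : M2) i j = 0 := by simp [co]

lemma gevreyFn_zero {s : ℝ} : GevreyFn s fun _ _ => (0 : ℂ) :=
  ⟨1, 1, one_pos, one_pos, by intro i j; simp; positivity⟩

lemma gevreyFn_add {s : ℝ} {F G : ℕ → ℕ → ℂ} (hF : GevreyFn s F) (hG : GevreyFn s G) :
    GevreyFn s fun i j => F i j + G i j := by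
  obtain ⟨C, R, hC, hR, h⟩ := hF
  obtain ⟨C', R', hC', hR', h'⟩ := hG
  refine ⟨C + C', max R R', by positivity, lt_of_lt_of_le hR (le_max_left _ _), fun i j => ?_⟩
  have h1 := h i j
  have h2 := h' i j
  have hRm : R ^ (i + j) ≤ (max R R') ^ (i + j) := pow_le_pow_left₀ hR.le (le_max_left _ _) _
  have hRm' : R' ^ (i + j) ≤ (max R R') ^ (i + j) := pow_le_pow_left₀ hR'.le (le_max_right _ _) _
  have hfac : (0 : ℝ) ≤ (j.factorial : ℝ) ^ (s - 1) := by positivity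
  calc ‖F i j + G i j‖ ≤ ‖F i j‖ + ‖G i j‖ :=
        norm_add_le _ _
    _ ≤ C * R ^ (i + j) * (j.factorial : ℝ) ^ (s - 1)
        + C' * R' ^ (i + j) * (j.factorial : ℝ) ^ (s - 1) := add_le_add h1 h2
    _ ≤ C * (max R R') ^ (i + j) * (j.factorial : ℝ) ^ (s - 1)
        + C' * (max R R') ^ (i + j) * (j.factorial : ℝ) ^ (s - 1) := by gcongr
    _ = (C + C') * (max R R') ^ (i + j) * (j.factorial : ℝ) ^ (s - 1) := by ring

lemma gevreyFn_smul {s : ℝ} (c : ℂ) {F : ℕ → ℕ → ℂ} (hF : GevreyFn s F) :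
    GevreyFn s fun i j => c * F i j := by
  obtain ⟨C, R, hC, hR, h⟩ := hF
  refine ⟨(‖c‖ + 1) * C, R, by positivity, hR, fun i j => ?_⟩
  have h1 := h i j
  calc ‖c * F i j‖ = ‖c‖ * ‖F i j‖ := by simp [map_mul]
    _ ≤ (‖c‖ + 1) * (C * R ^ (i + j) * (j.factorial : ℝ) ^ (s - 1)) := by
        apply mul_le_mul (by linarith) h1 (norm_nonneg _) (by positivity)
    _ = (‖c‖ + 1) * C * R ^ (i + j) * (j.factorial : ℝ) ^ (s - 1) := by ring

lemma gevreyFn_co_add {s : ℝ} {f g : M2} (hf : GevreyFn s (co f)) (hg : GevreyFn s (co g)) :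
    GevreyFn s (co (f + g)) := by
  have : co (f + g) = fun i j => co f i j + co g i j := by funext i j; exact co_add f g i j
  rw [this]; exact gevreyFn_add hf hg

lemma gevreyFn_co_smul {s : ℝ} (c : ℂ) {f : M2} (hf : GevreyFn s (co f)) :
    GevreyFn s (co (c • f)) := by
  have : co (c • f) = fun i j => c * co f i j := by funext i j; exact co_smul c f i j
  rw [this]; exact gevreyFn_smul c hf

lemma gevreyFn_co_zero {s : ℝ} : GevreyFn s (co (0 : M2)) := by
  have : co (0 : M2) = fun _ _ => (0 : ℂ) := by funext i j; exact co_zero i j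
  rw [this]; exact gevreyFn_zero

lemma pco_add (a b : ℕ) (f g : M2) (i j : ℕ) :
    Pco a b (f + g) i j = Pco a b f i j + Pco a b g i j := by
  simp only [Pco, co_add]; ring

lemma pco_smul (a b : ℕ) (c : ℂ) (f : M2) (i j : ℕ) :
    Pco a b (c • f) i j = c * Pco a b f i j := by
  simp only [Pco, co_smul]; ring

lemma pco_zero (a b : ℕ) (i j : ℕ) : Pco a b (0 : M2) i j = 0 := by
  simp [Pco, co_zero]

lemma eco_add (a b : ℕ) (β : ℂ) (f g : M2) (i j : ℕ) :
    Eco a b β (f + g) i j = Eco a b β f i j + Eco a b β g i j := by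
  simp only [Eco, co_add]; ring

lemma eco_smul (a b : ℕ) (β : ℂ) (c : ℂ) (f : M2) (i j : ℕ) :
    Eco a b β (c • f) i j = c * Eco a b β f i j := by
  simp only [Eco, co_smul]; ring

lemma eco_zero (a b : ℕ) (β : ℂ) (i j : ℕ) : Eco a b β (0 : M2) i j = 0 := by
  simp [Eco, co_zero]

lemma epco_add (a b : ℕ) (β ε : ℂ) (f g : M2) (i j : ℕ) :
    Epco a b β ε (f + g) i j = Epco a b β ε f i j + Epco a b β ε g i j := by
  simp only [Epco, co_add]; ring

lemma epco_smul (a b : ℕ) (β ε : ℂ) (c : ℂ) (f : M2) (i j : ℕ) :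
    Epco a b β ε (c • f) i j = c * Epco a b β ε f i j := by
  simp only [Epco, co_smul]; ring

lemma epco_zero (a b : ℕ) (β ε : ℂ) (i j : ℕ) : Epco a b β ε (0 : M2) i j = 0 := by
  simp [Epco, co_zero]

/-- The space of Gevrey-order-`s` solutions of the hypergeometric system at `p = (ε,0)`. -/
def GSolP (a b : ℕ) (β ε : ℂ) (s : ℝ) : Submodule ℂ M2 where
  carrier := {f | GevreyFn s (co f) ∧ (∀ i j : ℕ, Pco a b f i j = 0) ∧
    ∀ i j : ℕ, Epco a b β ε f i j = 0}
  add_mem' := by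
    rintro f g ⟨hf0, hf1, hf2⟩ ⟨hg0, hg1, hg2⟩
    exact ⟨gevreyFn_co_add hf0 hg0,
      fun i j => by rw [pco_add, hf1 i j, hg1 i j, add_zero],
      fun i j => by rw [epco_add, hf2 i j, hg2 i j, add_zero]⟩
  zero_mem' := ⟨gevreyFn_co_zero, fun i j => pco_zero a b i j, fun i j => epco_zero a b β ε i j⟩
  smul_mem' := by
    rintro c f ⟨hf0, hf1, hf2⟩
    exact ⟨gevreyFn_co_smul c hf0,
      fun i j => by rw [pco_smul, hf1 i j, mul_zero],
      fun i j => by rw [epco_smul, hf2 i j, mul_zero]⟩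

def mk2 (F : ℕ → ℕ → ℂ) : M2 := fun d => F (d 0) (d 1)
lemma co_mk2 (F : ℕ → ℕ → ℂ) (i j : ℕ) : co (mk2 F) i j = F i j := by
  have h : MvPowerSeries.coeff (Finsupp.single (0 : Fin 2) i + Finsupp.single (1 : Fin 2) j) (mk2 F)
      = F ((Finsupp.single (0 : Fin 2) i + Finsupp.single (1 : Fin 2) j) 0)
          ((Finsupp.single (0 : Fin 2) i + Finsupp.single (1 : Fin 2) j) 1) := rfl
  rw [co, h]
  simp [Finsupp.single_apply]
lemma ext2 (f : M2) (h : ∀ i j, co f i j = 0) : f = 0 := by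
  ext d
  have h2 : d = Finsupp.single (0 : Fin 2) (d 0) + Finsupp.single (1 : Fin 2) (d 1) := by
    ext x
    fin_cases x <;> simp [Finsupp.single_apply]
  rw [h2]
  simpa [co] using h (d 0) (d 1)

lemma fact_add_le (j a : ℕ) : (j+a).factorial ≤ j.factorial * (j+a)^a := by
  induction a with
  | zero => simp
  | succ a ih =>
      have h1 : (j + (a+1)).factorial = (j + a + 1) * (j + a).factorial := by
        rw [show j + (a+1) = (j + a) + 1 by ring, Nat.factorial_succ]
      rw [h1]
      calc (j + a + 1) * (j+a).factorial ≤ (j + a + 1) * (j.factorial * (j+a)^a) :=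
            Nat.mul_le_mul_left _ ih
        _ ≤ (j + (a+1)) * (j.factorial * (j + (a+1))^a) := by
            apply Nat.mul_le_mul (by omega)
            exact Nat.mul_le_mul_left _ (Nat.pow_le_pow_left (by omega) _)
        _ = j.factorial * (j + (a+1))^(a+1) := by ring

lemma fact_ratio_mul (j a : ℕ) :
    ((j+a).factorial / j.factorial : ℕ) * j.factorial = (j+a).factorial :=
  Nat.div_mul_cancel (Nat.factorial_dvd_factorial (by omega))

lemma fact_ratio_le (j a : ℕ) : ((j+a).factorial / j.factorial : ℕ) ≤ (j+a)^a :=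
  Nat.div_le_of_le_mul (fact_add_le j a)

lemma fact_ratio_pos (j a : ℕ) : 0 < ((j+a).factorial / j.factorial : ℕ) :=
  Nat.div_pos (Nat.factorial_le (by omega)) (Nat.factorial_pos _)

lemma factor_ne {a b n₁ n₂ : ℕ} (hab : Nat.Coprime a b) {j k : ℕ}
    (hj : j % a ≠ n₂ % a) :
    ((a*k + b*j : ℕ):ℂ) - ((a*n₁ + b*n₂ : ℕ):ℂ) ≠ 0 := by
  intro h
  have heq : (a*k + b*j : ℕ) = (a*n₁ + b*n₂ : ℕ) := by
    exact_mod_cast sub_eq_zero.mp h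
  have hz : (a:ℤ)*k + b*j = a*n₁ + b*n₂ := by exact_mod_cast heq
  have hdvd : (a:ℤ) ∣ (b:ℤ) * ((j:ℤ) - n₂) := ⟨(n₁:ℤ) - k, by linarith [hz]⟩
  have hcop : IsCoprime (a:ℤ) (b:ℤ) := Nat.isCoprime_iff_coprime.mpr hab
  have hdvd2 : (a:ℤ) ∣ ((j:ℤ) - n₂) := hcop.dvd_of_dvd_mul_left hdvd
  have hmod : (n₂:ℤ) % a = (j:ℤ) % a := Int.modEq_iff_dvd.mpr hdvd2
  omega

section Sol
variable {a b : ℕ} {β ε : ℂ} {f : M2}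

lemma E_mul (hE : ∀ i j, Epco a b β ε f i j = 0) (i j : ℕ) :
    (a:ℂ) * ε * ((i:ℂ)+1) * co f (i+1) j = (β - ((a*i + b*j : ℕ):ℂ)) * co f i j := by
  have h := hE i j
  unfold Epco at h
  linear_combination h

lemma coeffA_ne (ha : 0 < a) (hε : ε ≠ 0) (i : ℕ) : (a:ℂ) * ε * ((i:ℂ)+1) ≠ 0 :=
  mul_ne_zero (mul_ne_zero (Nat.cast_ne_zero.mpr ha.ne') hε) (Nat.cast_add_one_ne_zero i)

lemma row_zero (hE : ∀ i j, Epco a b β ε f i j = 0) (ha : 0 < a) (hε : ε ≠ 0)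
    {j : ℕ} (h0 : co f 0 j = 0) : ∀ i, co f i j = 0 := by
  intro i
  induction i with
  | zero => exact h0
  | succ i ih =>
      have h := E_mul hE i j
      rw [ih, mul_zero] at h
      exact (mul_eq_zero.mp h).resolve_left (coeffA_ne ha hε i)

lemma P_mul (hP : ∀ i j, Pco a b f i j = 0) (i j : ℕ) :
    (((i + b).factorial / i.factorial : ℕ) : ℂ) * co f (i + b) j
      = (((j + a).factorial / j.factorial : ℕ) : ℂ) * co f i (j + a) := by
  have h := hP i j
  unfold Pco at h
  linear_combination h


lemma abs_num_ge {N : ℕ} (hβ : β = (N:ℂ)) (i j : ℕ) (h : (N:ℝ) ≤ (b:ℝ)*j) :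
    (b:ℝ)*j - N ≤ ‖β - ((a*i + b*j : ℕ):ℂ)‖ := by
  have h1 : β - ((a*i + b*j : ℕ):ℂ) = Complex.ofReal ((N:ℝ) - ((a*i+b*j : ℕ):ℝ)) := by
    rw [hβ]; push_cast; ring
  rw [h1, Complex.norm_real, Real.norm_eq_abs, abs_sub_comm]
  calc (b:ℝ)*j - N ≤ ((a*i+b*j : ℕ):ℝ) - N := by push_cast; nlinarith [Nat.cast_nonneg (α := ℝ) (a*i)]
    _ ≤ |((a*i+b*j : ℕ):ℝ) - N| := le_abs_self _

lemma row_lower (hE : ∀ i j, Epco a b β ε f i j = 0) (ha : 0 < a) (hb : 0 < b) (hε : ε ≠ 0)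
    {N : ℕ} (hβ : β = (N:ℂ)) {j : ℕ} (hj : (N:ℝ) ≤ (b:ℝ)*j) :
    ∀ k, k ≤ b → ‖co f 0 j‖ * (((b:ℝ)*j - N)/((a:ℝ)*‖ε‖*b))^k
      ≤ ‖co f k j‖ := by
  have hE0 : 0 < ‖ε‖ := norm_pos_iff.mpr hε
  set E := ‖ε‖ with hEdef
  have hden : (0:ℝ) < (a:ℝ)*E*b := by positivity
  set q : ℝ := ((b:ℝ)*j - N)/((a:ℝ)*E*b) with hqdef
  have hqnum : (0:ℝ) ≤ (b:ℝ)*j - N := by linarith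
  have hq0 : 0 ≤ q := div_nonneg hqnum hden.le
  intro k
  induction k with
  | zero => intro _; simpa using le_refl _
  | succ k ih =>
      intro hk1
      have ih' := ih (by omega)
      have hme := E_mul hE k j
      have h2 : (a:ℝ) * E * ((k:ℝ)+1) * ‖co f (k+1) j‖
          = ‖β - ((a*k + b*j : ℕ):ℂ)‖ * ‖co f k j‖ := by
        have h3 : ‖(a:ℂ)*ε*((k:ℂ)+1) * co f (k+1) j‖
            = ‖(β - ((a*k + b*j : ℕ):ℂ)) * co f k j‖ := by rw [hme]
        rw [show ((k:ℂ)+1) = ((k+1:ℕ):ℂ) by push_cast; ring] at h3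
        simp only [norm_mul, Complex.norm_natCast] at h3
        rw [← h3]; push_cast; ring
      have hknum := abs_num_ge (a := a) hβ k j hj
      have h3 : ((b:ℝ)*j - N) * (‖co f 0 j‖ * q^k)
          ≤ ((a:ℝ)*E*b) * ‖co f (k+1) j‖ := by
        calc ((b:ℝ)*j - N) * (‖co f 0 j‖ * q^k)
            ≤ ‖β - ((a*k + b*j : ℕ):ℂ)‖ * ‖co f k j‖ :=
              mul_le_mul hknum ih' (by positivity) (norm_nonneg _)
          _ = (a:ℝ) * E * ((k:ℝ)+1) * ‖co f (k+1) j‖ := h2.symm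
          _ ≤ ((a:ℝ)*E*b) * ‖co f (k+1) j‖ := by
              apply mul_le_mul_of_nonneg_right _ (norm_nonneg _)
              have : (k:ℝ)+1 ≤ (b:ℝ) := by exact_mod_cast hk1
              nlinarith
      have h4 : ‖co f 0 j‖ * q^(k+1)
          = (((b:ℝ)*j - N) * (‖co f 0 j‖ * q^k))/((a:ℝ)*E*b) := by
        rw [hqdef]; ring
      rw [h4, div_le_iff₀ hden]
      linarith [h3]

lemma P_abs (hP : ∀ i j, Pco a b f i j = 0) (i j : ℕ) :
    (((i + b).factorial / i.factorial : ℕ):ℝ) * ‖co f (i + b) j‖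
      = (((j + a).factorial / j.factorial : ℕ):ℝ) * ‖co f i (j + a)‖ := by
  have h := P_mul hP i j
  have h2 : ‖(((i + b).factorial / i.factorial : ℕ) : ℂ) * co f (i + b) j‖
      = ‖(((j + a).factorial / j.factorial : ℕ) : ℂ) * co f i (j + a)‖ := by rw [h]
  simpa [map_mul, Complex.norm_natCast] using h2

lemma col_lower (hE : ∀ i j, Epco a b β ε f i j = 0) (hP : ∀ i j, Pco a b f i j = 0)
    (ha : 0 < a) (hb : 0 < b) (hε : ε ≠ 0)
    {N : ℕ} (hβ : β = (N:ℂ)) {j : ℕ} (hj : (N:ℝ) ≤ (b:ℝ)*j) :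
    ‖co f 0 j‖ * (((b:ℝ)*j - N)/((a:ℝ)*‖ε‖*b))^b / ((j:ℝ)+a)^a
      ≤ ‖co f 0 (j+a)‖ := by
  have hPa := P_abs hP 0 j
  rw [zero_add] at hPa
  have hrl := row_lower hE ha hb hε hβ hj b le_rfl
  have hB1 : (1:ℝ) ≤ ((b.factorial / Nat.factorial 0 : ℕ):ℝ) := by
    have := fact_ratio_pos 0 b
    rw [zero_add] at this
    exact_mod_cast this
  have hD : (((j + a).factorial / j.factorial : ℕ):ℝ) ≤ ((j:ℝ)+a)^a := by
    have := fact_ratio_le j a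
    calc (((j + a).factorial / j.factorial : ℕ):ℝ) ≤ (((j+a)^a : ℕ):ℝ) := by exact_mod_cast this
      _ = ((j:ℝ)+a)^a := by push_cast; ring
  have hja : (0:ℝ) < ((j:ℝ)+a)^a := by positivity
  rw [div_le_iff₀ hja]
  calc ‖co f 0 j‖ * (((b:ℝ)*j - N)/((a:ℝ)*‖ε‖*b))^b
      ≤ ‖co f b j‖ := hrl
    _ ≤ ((b.factorial / Nat.factorial 0 : ℕ):ℝ) * ‖co f b j‖ := by
        nlinarith [norm_nonneg (co f b j)]
    _ = (((j + a).factorial / j.factorial : ℕ):ℝ) * ‖co f 0 (j + a)‖ := hPa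
    _ ≤ ‖co f 0 (j+a)‖ * ((j:ℝ)+a)^a := by
        rw [mul_comm]
        exact mul_le_mul_of_nonneg_left hD (norm_nonneg _)

lemma row_ne (hE : ∀ i j, Epco a b β ε f i j = 0) (hab : Nat.Coprime a b) (ha : 0 < a)
    (hε : ε ≠ 0) {n₁ n₂ : ℕ} (hβ : β = ((a*n₁+b*n₂ : ℕ):ℂ))
    {j : ℕ} (hjmod : j % a ≠ n₂ % a) (h0 : co f 0 j ≠ 0) : ∀ k, co f k j ≠ 0 := by
  intro k
  induction k with
  | zero => exact h0
  | succ k ih =>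
      have hme := E_mul hE k j
      have hfac : β - ((a*k + b*j : ℕ):ℂ) ≠ 0 := by
        rw [hβ]
        intro hz
        exact factor_ne hab hjmod (neg_eq_zero.mp (by rw [← hz]; ring))
      intro hz
      rw [hz, mul_zero] at hme
      exact (mul_ne_zero hfac ih) hme.symm

lemma col_ne (hE : ∀ i j, Epco a b β ε f i j = 0) (hP : ∀ i j, Pco a b f i j = 0)
    (hab : Nat.Coprime a b) (ha : 0 < a) (hε : ε ≠ 0)
    {n₁ n₂ : ℕ} (hβ : β = ((a*n₁+b*n₂ : ℕ):ℂ))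
    {j : ℕ} (hjmod : j % a ≠ n₂ % a) (h0 : co f 0 j ≠ 0) : co f 0 (j+a) ≠ 0 := by
  have hb := row_ne hE hab ha hε hβ hjmod h0 b
  have hPm := P_mul hP 0 j
  rw [zero_add] at hPm
  intro hz
  rw [hz, mul_zero] at hPm
  have hBne : ((b.factorial / Nat.factorial 0 : ℕ):ℂ) ≠ 0 := by
    have := fact_ratio_pos 0 b
    rw [zero_add] at this
    exact_mod_cast this.ne'
  exact (mul_ne_zero hBne hb) hPm


lemma main_ineq (a b N : ℕ) (E R s : ℝ) (ha : 0 < a) (hb2 : 2 ≤ b) (hE0 : 0 < E) (hR : 0 < R)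
    (hs1 : 1 ≤ s) (hδ : 0 < (b:ℝ) - (a:ℝ)*s) :
    ∃ J : ℕ, ∀ j : ℕ, J ≤ j →
      2 * (R^a * ((j:ℝ)+a)^((a:ℝ)*(s-1))) * ((j:ℝ)+a)^a * ((a:ℝ)*E*b)^b
        ≤ ((b:ℝ)*j - N)^b := by
  have hs0 : (0:ℝ) ≤ (a:ℝ)*(s-1) := mul_nonneg (Nat.cast_nonneg a) (by linarith)
  set δ := (b:ℝ) - (a:ℝ)*s with hδdef
  set K : ℝ := 2 * (R^a * (2:ℝ)^((a:ℝ)*(s-1))) * 2^a * ((a:ℝ)*E*b)^b with hKdef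
  have hK0 : 0 < K := by
    have ha' : (0:ℝ) < (a:ℝ) := by exact_mod_cast ha
    have hb' : (0:ℝ) < (b:ℝ) := by positivity
    positivity
  set K' := max K 1 with hK'def
  have hK'1 : (1:ℝ) ≤ K' := le_max_right _ _
  have hK'0 : (0:ℝ) < K' := lt_of_lt_of_le one_pos hK'1
  obtain ⟨J0, hJ0⟩ := exists_nat_ge (K' ^ (1/δ))
  refine ⟨J0 + N + a + 1, fun j hj => ?_⟩
  have hxdef : ∀ y:ℝ, y = y := fun _ => rfl
  set x : ℝ := (j:ℝ) with hxd2
  have hx1 : (1:ℝ) ≤ x := by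
    have : 1 ≤ j := by omega
    rw [hxd2]; exact_mod_cast this
  have hx0 : (0:ℝ) < x := lt_of_lt_of_le one_pos hx1
  have hxN : (N:ℝ) ≤ x := by
    have : N ≤ j := by omega
    rw [hxd2]; exact_mod_cast this
  have hxa : (a:ℝ) ≤ x := by
    have : a ≤ j := by omega
    rw [hxd2]; exact_mod_cast this
  have hxJ0 : (J0:ℝ) ≤ x := by
    have : J0 ≤ j := by omega
    rw [hxd2]; exact_mod_cast this
  have hxd : K' ≤ x ^ δ := by
    have h1 : K' ^ (1/δ) ≤ x := le_trans hJ0 hxJ0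
    have h2 : (K' ^ (1/δ)) ^ δ ≤ x ^ δ :=
      Real.rpow_le_rpow (Real.rpow_nonneg hK'0.le _) h1 hδ.le
    rwa [← Real.rpow_mul hK'0.le, one_div, inv_mul_cancel₀ hδ.ne', Real.rpow_one] at h2
  have hcore : K' * x ^ ((a:ℝ)*s) ≤ x ^ ((b:ℝ)) := by
    have hsplit : x ^ ((b:ℝ)) = x ^ ((a:ℝ)*s) * x ^ δ := by
      rw [← Real.rpow_add hx0, hδdef]; ring_nf
    rw [hsplit]
    have := mul_le_mul_of_nonneg_left hxd (Real.rpow_nonneg hx0.le ((a:ℝ)*s))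
    linarith
  -- bound (x+a) by 2x
  have hxa2 : x + a ≤ 2*x := by linarith
  have hxap : (0:ℝ) ≤ x + a := by positivity
  have h2x : ((x+a):ℝ)^((a:ℝ)*(s-1)) ≤ (2:ℝ)^((a:ℝ)*(s-1)) * x^((a:ℝ)*(s-1)) := by
    calc (x+a)^((a:ℝ)*(s-1)) ≤ (2*x)^((a:ℝ)*(s-1)) :=
          Real.rpow_le_rpow hxap hxa2 hs0
      _ = (2:ℝ)^((a:ℝ)*(s-1)) * x^((a:ℝ)*(s-1)) :=
          Real.mul_rpow (by norm_num) hx0.le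
  have h2xa : (x+a)^a ≤ 2^a * x^a := by
    calc (x+a)^a ≤ (2*x)^a := pow_le_pow_left₀ hxap hxa2 a
      _ = 2^a * x^a := mul_pow 2 x a
  have hxmerge : x^((a:ℝ)*(s-1)) * x^a = x^((a:ℝ)*s) := by
    rw [← Real.rpow_natCast x a, ← Real.rpow_add hx0]; ring_nf
  have hfin : 2 * (R^a * ((x+a))^((a:ℝ)*(s-1))) * ((x+a))^a * ((a:ℝ)*E*b)^b
      ≤ K * x^((a:ℝ)*s) := by
    have hAEb : (0:ℝ) ≤ ((a:ℝ)*E*b)^b := by positivity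
    have hRa : (0:ℝ) ≤ R^a := by positivity
    have h1 : 2 * (R^a * ((x+a))^((a:ℝ)*(s-1))) * ((x+a))^a * ((a:ℝ)*E*b)^b
        ≤ 2 * (R^a * ((2:ℝ)^((a:ℝ)*(s-1)) * x^((a:ℝ)*(s-1)))) * (2^a * x^a) * ((a:ℝ)*E*b)^b := by
      have hx1' : (0:ℝ) ≤ x^((a:ℝ)*(s-1)) := Real.rpow_nonneg hx0.le _
      have hxa' : (0:ℝ) ≤ (x+a)^((a:ℝ)*(s-1)) := Real.rpow_nonneg hxap _
      gcongr
    calc 2 * (R^a * ((x+a))^((a:ℝ)*(s-1))) * ((x+a))^a * ((a:ℝ)*E*b)^b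
        ≤ 2 * (R^a * ((2:ℝ)^((a:ℝ)*(s-1)) * x^((a:ℝ)*(s-1)))) * (2^a * x^a) * ((a:ℝ)*E*b)^b := h1
      _ = K * (x^((a:ℝ)*(s-1)) * x^a) := by rw [hKdef]; ring
      _ = K * x^((a:ℝ)*s) := by rw [hxmerge]
  have hlast : x ^ ((b:ℝ)) ≤ ((b:ℝ)*x - N)^b := by
    rw [Real.rpow_natCast]
    apply pow_le_pow_left₀ hx0.le
    have hb' : (2:ℝ) ≤ (b:ℝ) := by exact_mod_cast hb2
    nlinarith
  have hKK' : K * x^((a:ℝ)*s) ≤ K' * x^((a:ℝ)*s) :=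
    mul_le_mul_of_nonneg_right (le_max_left _ _) (Real.rpow_nonneg hx0.le _)
  calc 2 * (R^a * ((x+a))^((a:ℝ)*(s-1))) * ((x+a))^a * ((a:ℝ)*E*b)^b
      ≤ K * x^((a:ℝ)*s) := hfin
    _ ≤ K' * x^((a:ℝ)*s) := hKK'
    _ ≤ x ^ ((b:ℝ)) := hcore
    _ ≤ ((b:ℝ)*x - N)^b := hlast


lemma bad_row_zero (hE : ∀ i j, Epco a b β ε f i j = 0) (hP : ∀ i j, Pco a b f i j = 0)
    (hab : Nat.Coprime a b) (ha : 0 < a) (haltb : a < b) (hε : ε ≠ 0)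
    {n₁ n₂ : ℕ} (hβ : β = ((a*n₁+b*n₂ : ℕ):ℂ)) {s : ℝ} (hs1 : 1 ≤ s)
    (hs2 : s < (b:ℝ)/(a:ℝ)) (hG : GevreyFn s (co f))
    {j0 : ℕ} (hjmod : j0 % a ≠ n₂ % a) : co f 0 j0 = 0 := by
  by_contra h0
  obtain ⟨C, R, hC, hR, hGb⟩ := hG
  set N := a*n₁+b*n₂ with hNdef
  set E := ‖ε‖ with hEdef
  have hE0 : 0 < E := norm_pos_iff.mpr hε
  have hb : 0 < b := lt_trans ha haltb
  have hb2 : 2 ≤ b := by omega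
  have ha' : (0:ℝ) < (a:ℝ) := by exact_mod_cast ha
  have hδ : 0 < (b:ℝ) - (a:ℝ)*s := by
    have := (lt_div_iff₀ ha').mp hs2
    nlinarith
  -- the sequence of columns
  set jm : ℕ → ℕ := fun m => j0 + a*m with hjmdef
  have hjm_mod : ∀ m, jm m % a ≠ n₂ % a := by
    intro m
    simpa [hjmdef, Nat.add_mul_mod_self_left] using hjmod
  have hjm_succ : ∀ m, jm (m+1) = jm m + a := by intro m; simp [hjmdef]; ring
  have hne : ∀ m, co f 0 (jm m) ≠ 0 := by
    intro m
    induction m with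
    | zero => simpa [hjmdef] using h0
    | succ m ih =>
        rw [hjm_succ m]
        exact col_ne hE hP hab ha hε hβ (hjm_mod m) ih
  -- Gevrey bound sequence
  set B : ℕ → ℝ := fun m => C * R ^ (jm m) * (((jm m).factorial : ℝ)) ^ (s - 1) with hBdef
  set w : ℕ → ℝ := fun m => ‖co f 0 (jm m)‖ with hwdef
  have hB0 : ∀ m, 0 < B m := by
    intro m
    have : (0:ℝ) < ((jm m).factorial : ℝ) := by exact_mod_cast (jm m).factorial_pos
    positivity
  have hw0 : ∀ m, 0 < w m := fun m => norm_pos_iff.mpr (hne m)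
  have hwB : ∀ m, w m ≤ B m := by
    intro m
    have := hGb 0 (jm m)
    simpa [hwdef, hBdef] using this
  have hBstep : ∀ m, B (m+1) ≤ B m * (R^a * (((jm m:ℝ))+a)^((a:ℝ)*(s-1))) := by
    intro m
    have hfr : ((jm m + a).factorial : ℝ)
        = ((jm m).factorial : ℝ) * (((jm m + a).factorial / (jm m).factorial : ℕ) : ℝ) := by
      rw [← Nat.cast_mul, mul_comm ((jm m).factorial) _, fact_ratio_mul]
    have hsm1 : (0:ℝ) ≤ s - 1 := by linarith
    have hratio : ((((jm m + a).factorial / (jm m).factorial : ℕ) : ℝ)) ^ (s-1)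
        ≤ (((jm m:ℝ))+a)^((a:ℝ)*(s-1)) := by
      have h1 : ((((jm m + a).factorial / (jm m).factorial : ℕ) : ℝ)) ≤ ((jm m:ℝ)+a)^a := by
        have := fact_ratio_le (jm m) a
        calc ((((jm m + a).factorial / (jm m).factorial : ℕ) : ℝ)) ≤ (((jm m + a)^a : ℕ):ℝ) := by
              exact_mod_cast this
          _ = ((jm m:ℝ)+a)^a := by push_cast; ring
      calc ((((jm m + a).factorial / (jm m).factorial : ℕ) : ℝ)) ^ (s-1)
          ≤ (((jm m:ℝ)+a)^a) ^ (s-1) :=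
            Real.rpow_le_rpow (Nat.cast_nonneg _) h1 hsm1
        _ = ((jm m:ℝ)+a)^((a:ℝ)*(s-1)) := by
            rw [← Real.rpow_natCast ((jm m:ℝ)+a) a, ← Real.rpow_mul (by positivity)]
      ;
    have hexp : B (m+1) = B m * R^a * ((((jm m + a).factorial / (jm m).factorial : ℕ) : ℝ)) ^ (s-1) := by
      simp only [hBdef, hjm_succ m]
      rw [hfr, Real.mul_rpow (Nat.cast_nonneg _) (Nat.cast_nonneg _), pow_add]
      ring
    rw [hexp]
    have : B m * R^a * ((((jm m + a).factorial / (jm m).factorial : ℕ) : ℝ)) ^ (s-1)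
        ≤ B m * R^a * ((((jm m:ℝ))+a)^((a:ℝ)*(s-1))) := by
      apply mul_le_mul_of_nonneg_left hratio
      positivity
    calc B m * R^a * ((((jm m + a).factorial / (jm m).factorial : ℕ) : ℝ)) ^ (s-1)
        ≤ B m * R^a * ((((jm m:ℝ))+a)^((a:ℝ)*(s-1))) := this
      _ = B m * (R^a * (((jm m:ℝ))+a)^((a:ℝ)*(s-1))) := by ring
  -- main inequality
  obtain ⟨J1, hJ1⟩ := main_ineq a b N E R s ha hb2 hE0 hR hs1 hδ
  set J : ℕ := J1 + N + 1 with hJdef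
  have hjmJ : ∀ m, J ≤ m → J ≤ jm m := by
    intro m hm
    have : m ≤ jm m := by
      simp only [hjmdef]
      calc m ≤ a * m := Nat.le_mul_of_pos_left m ha
        _ ≤ j0 + a*m := Nat.le_add_left _ _
    omega
  -- step inequality for v m = w m / B m
  set v : ℕ → ℝ := fun m => w m / B m with hvdef
  have hv1 : ∀ m, v m ≤ 1 := fun m => (div_le_one (hB0 m)).mpr (hwB m)
  have hv0 : ∀ m, 0 < v m := fun m => div_pos (hw0 m) (hB0 m)
  have hvstep : ∀ m, J ≤ m → 2 * v m ≤ v (m+1) := by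
    intro m hm
    set x : ℝ := (jm m : ℝ) with hxdef
    have hxN : (N:ℝ) ≤ (b:ℝ)*x := by
      have h1 : N ≤ jm m := by have := hjmJ m hm; omega
      have h2 : (N:ℝ) ≤ x := by rw [hxdef]; exact_mod_cast h1
      have hb1 : (1:ℝ) ≤ (b:ℝ) := by exact_mod_cast hb
      nlinarith [le_trans (Nat.cast_nonneg N : (0:ℝ) ≤ (N:ℝ)) h2]
    set q : ℝ := ((b:ℝ)*x - N)/((a:ℝ)*E*b) with hqdef
    have hwstep : w m * q^b / (x+a)^a ≤ w (m+1) := by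
      have h := col_lower hE hP ha hb hε hβ (j := jm m) hxN
      rw [← hjm_succ m] at h
      simpa [hwdef, hxdef, hqdef] using h
    have hMI := hJ1 (jm m) (by have := hjmJ m hm; omega)
    rw [← hxdef] at hMI
    have hden : (0:ℝ) < (a:ℝ)*E*b := by positivity
    have hdenb : (0:ℝ) < ((a:ℝ)*E*b)^b := by positivity
    set X : ℝ := R^a * (x+a)^((a:ℝ)*(s-1)) with hXdef
    have hxge : (0:ℝ) ≤ x := by rw [hxdef]; exact Nat.cast_nonneg _
    have hxap : (0:ℝ) < x + a := by linarith
    have hX0 : (0:ℝ) < X := by rw [hXdef]; positivity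
    have hxa0 : (0:ℝ) < (x+a)^a := by positivity
    have hkey : 2 * X * (x+a)^a ≤ q^b := by
      rw [hqdef, div_pow, le_div_iff₀ hdenb]
      calc 2 * X * (x+a)^a * ((a:ℝ)*E*b)^b
          = 2 * (R^a * (x+a)^((a:ℝ)*(s-1))) * (x+a)^a * ((a:ℝ)*E*b)^b := by rw [hXdef]
        _ ≤ ((b:ℝ)*x - N)^b := hMI
    have hBs := hBstep m
    rw [← hxdef, ← hXdef] at hBs
    have h3 : 2 * w m * X ≤ w m * q^b / (x+a)^a := by
      rw [le_div_iff₀ hxa0]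
      calc 2 * w m * X * (x+a)^a = w m * (2 * X * (x+a)^a) := by ring
        _ ≤ w m * q^b := mul_le_mul_of_nonneg_left hkey (hw0 m).le
    have h2 : 2 * (w m / B m) = (2 * w m)/(B m) := by ring
    show 2 * (w m / B m) ≤ w (m+1) / B (m+1)
    rw [h2, div_le_div_iff₀ (hB0 m) (hB0 (m+1))]
    calc 2 * w m * B (m+1) ≤ 2 * w m * (B m * X) := by
          apply mul_le_mul_of_nonneg_left hBs
          have := hw0 m
          positivity
      _ = (2 * w m * X) * B m := by ring
      _ ≤ (w m * q^b / (x+a)^a) * B m := mul_le_mul_of_nonneg_right h3 (hB0 m).le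
      _ ≤ w (m+1) * B m := mul_le_mul_of_nonneg_right hwstep (hB0 m).le
  have hgrow : ∀ t, 2^t * v J ≤ v (J + t) := by
    intro t
    induction t with
    | zero => simp
    | succ t ih =>
        have hst := hvstep (J + t) (by omega)
        calc 2^(t+1) * v J = 2 * (2^t * v J) := by ring
          _ ≤ 2 * v (J + t) := by linarith [ih]
          _ ≤ v (J + t + 1) := hst
  obtain ⟨t, ht⟩ := pow_unbounded_of_one_lt (R := ℝ) (1 / v J) one_lt_two
  have h1 : 1 < 2^t * v J := by
    rw [div_lt_iff₀ (hv0 J)] at ht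
    linarith
  have h2 := hgrow t
  have h3 := hv1 (J + t)
  linarith


lemma sol_zero (hE : ∀ i j, Epco a b β ε f i j = 0) (hP : ∀ i j, Pco a b f i j = 0)
    (hab : Nat.Coprime a b) (ha : 0 < a) (haltb : a < b) (hε : ε ≠ 0)
    {n₁ n₂ : ℕ} (hβ : β = ((a*n₁+b*n₂ : ℕ):ℂ)) {s : ℝ} (hs1 : 1 ≤ s)
    (hs2 : s < (b:ℝ)/(a:ℝ)) (hG : GevreyFn s (co f))
    (hr : co f 0 (n₂ % a) = 0) : ∀ j i, co f i j = 0 := by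
  intro j
  induction j using Nat.strong_induction_on with
  | _ j ih =>
    rcases Nat.lt_or_ge j a with hja | hja
    · rcases eq_or_ne j (n₂ % a) with he | hne
      · exact row_zero hE ha hε (he ▸ hr)
      · exact row_zero hE ha hε (bad_row_zero hE hP hab ha haltb hε hβ hs1 hs2 hG
          (by rwa [Nat.mod_eq_of_lt hja]))
    · intro i
      have hD : 0 < ((j - a + a).factorial / (j - a).factorial : ℕ) := fact_ratio_pos (j-a) a
      have h := P_mul hP i (j - a)
      have hja2 : (j - a) + a = j := by omega
      rw [hja2] at h hD
      rw [ih (j - a) (by omega) (i + b), mul_zero] at h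
      have hDne : ((j.factorial / (j-a).factorial : ℕ) : ℂ) ≠ 0 := by exact_mod_cast hD.ne'
      rcases mul_eq_zero.mp h.symm with h' | h'
      · exact absurd h' hDne
      · exact h'

end Sol

lemma cast_fact_ratio (j a : ℕ) :
    (((j+a).factorial / j.factorial : ℕ) : ℂ) = ((j+a).factorial : ℂ) / (j.factorial : ℂ) := by
  rw [eq_div_iff (by exact_mod_cast (Nat.factorial_ne_zero j))]
  exact_mod_cast fact_ratio_mul j a

section Construct
variable (a b r p0 L : ℕ) (ε : ℂ)

/-- coefficients of the polynomial solution -/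
def gco (i j : ℕ) : ℂ :=
  if h : r ≤ j ∧ a ∣ (j - r) ∧ (j - r)/a ≤ L ∧ i ≤ p0 - b*((j-r)/a)
  then ε ^ (p0 - b*((j-r)/a) - i) /
    ((i.factorial : ℂ) * ((p0 - b*((j-r)/a) - i).factorial : ℂ) * (j.factorial : ℂ))
  else 0

lemma gco_E (ha : 0 < a) (hb : 0 < b) (hL : L = p0 / b) {β : ℂ}
    (hβ : β = ((a*p0 + b*r : ℕ):ℂ)) (i j : ℕ) :
    (((a*i + b*j : ℕ):ℂ) - β) * gco a b r p0 L ε i j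
      + (a:ℂ)*ε*((i:ℂ)+1)*gco a b r p0 L ε (i+1) j = 0 := by
  by_cases h1 : r ≤ j ∧ a ∣ (j - r) ∧ (j - r)/a ≤ L
  · obtain ⟨hrj, hdvd, hlL⟩ := h1
    set l := (j - r)/a with hldef
    have hla : a * l = j - r := Nat.mul_div_cancel' hdvd
    have hjl : j = r + a*l := by omega
    have hblp : b * l ≤ p0 := by
      have h0 : l * b ≤ p0 := (Nat.le_div_iff_mul_le hb).mp (hL ▸ hlL)
      have hc : b * l = l * b := Nat.mul_comm b l
      omega
    set P' := p0 - b*l with hPdef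
    by_cases h2 : i ≤ P'
    · obtain ⟨u, hu⟩ : ∃ u, P' = i + u := ⟨P' - i, by omega⟩
      have hp0' : p0 = b*l + (i + u) := by omega
      have hkeyN : a*p0 + b*r = (a*i + b*j) + a*u := by rw [hp0', hjl]; ring
      have hcoef : (((a*i + b*j : ℕ):ℂ) - β) = -(a:ℂ) * ((u : ℕ):ℂ) := by
        rw [hβ, hkeyN]; push_cast; ring
      by_cases h3 : i < P'
      · obtain ⟨v, hv⟩ : ∃ v, u = v + 1 := ⟨u - 1, by omega⟩
        rw [gco, dif_pos ⟨hrj, hdvd, hlL, by rw [← hldef, ← hPdef]; omega⟩,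
            gco, dif_pos ⟨hrj, hdvd, hlL, by rw [← hldef, ← hPdef]; omega⟩]
        rw [← hldef, ← hPdef, hcoef]
        have he1 : P' - i = v + 1 := by omega
        have he2 : P' - (i+1) = v := by omega
        rw [he1, he2, hv]
        have hfv : ((v+1).factorial : ℂ) = ((v:ℂ)+1) * (v.factorial : ℂ) := by
          rw [Nat.factorial_succ]; push_cast; ring
        have hfi : ((i+1).factorial : ℂ) = ((i:ℂ)+1) * (i.factorial : ℂ) := by
          rw [Nat.factorial_succ]; push_cast; ring
        have hne1 : (i.factorial : ℂ) ≠ 0 := by exact_mod_cast Nat.factorial_ne_zero i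
        have hne2 : (v.factorial : ℂ) ≠ 0 := by exact_mod_cast Nat.factorial_ne_zero v
        have hne3 : (j.factorial : ℂ) ≠ 0 := by exact_mod_cast Nat.factorial_ne_zero j
        have hne4 : ((v:ℂ)+1) ≠ 0 := Nat.cast_add_one_ne_zero v
        have hne5 : ((i:ℂ)+1) ≠ 0 := Nat.cast_add_one_ne_zero i
        rw [hfv, hfi, pow_succ]
        push_cast
        field_simp
        ring
      · have hu0 : u = 0 := by omega
        have hcoef0 : (((a*i + b*j : ℕ):ℂ) - β) = 0 := by
          rw [hcoef, hu0]; simp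
        rw [hcoef0, zero_mul, zero_add, gco,
            dif_neg (fun hc => by rw [← hldef, ← hPdef] at hc; omega), mul_zero]
    · rw [gco, dif_neg (fun hc => by rw [← hldef, ← hPdef] at hc; omega),
          gco, dif_neg (fun hc => by rw [← hldef, ← hPdef] at hc; omega)]
      ring
  · rw [gco, dif_neg (fun hc => h1 ⟨hc.1, hc.2.1, hc.2.2.1⟩),
        gco, dif_neg (fun hc => h1 ⟨hc.1, hc.2.1, hc.2.2.1⟩)]
    ring

lemma gco_P (ha : 0 < a) (hb : 0 < b) (hra : r < a) (hL : L = p0 / b) (i j : ℕ) :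
    (((i + b).factorial / i.factorial : ℕ) : ℂ) * gco a b r p0 L ε (i + b) j
      = (((j + a).factorial / j.factorial : ℕ) : ℂ) * gco a b r p0 L ε i (j + a) := by
  by_cases h1 : r ≤ j ∧ a ∣ (j - r)
  · obtain ⟨hrj, hdvd⟩ := h1
    set l := (j - r)/a with hldef
    have hla : a * l = j - r := Nat.mul_div_cancel' hdvd
    have hjl : j = r + a*l := by omega
    have hal1 : a * (l+1) = a*l + a := by ring
    have hdvd2 : a ∣ (j + a - r) := ⟨l+1, by omega⟩
    have hl2 : (j + a - r)/a = l + 1 := by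
      have h3 : j + a - r = a * (l+1) := by omega
      rw [h3, Nat.mul_div_cancel_left _ ha]
    have hbl1 : b * (l+1) = b*l + b := by ring
    by_cases h2 : l + 1 ≤ L
    · have hblp : b * (l+1) ≤ p0 := by
        have h0 : (l+1) * b ≤ p0 := (Nat.le_div_iff_mul_le hb).mp (hL ▸ h2)
        have hc : b * (l+1) = (l+1) * b := Nat.mul_comm b (l+1)
        omega
      have hlL : l ≤ L := by omega
      set P'' := p0 - b*(l+1) with hP2def
      have hP'eq : p0 - b*l = P'' + b := by omega
      by_cases h3 : i ≤ P''
      · rw [gco, dif_pos ⟨hrj, hdvd, hlL, by rw [← hldef, hP'eq]; omega⟩,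
            gco, dif_pos ⟨by omega, hdvd2, by rw [hl2]; omega, by rw [hl2, ← hP2def]; omega⟩]
        rw [← hldef, hl2, ← hP2def, hP'eq]
        have he : P'' + b - (i + b) = P'' - i := by omega
        rw [he, cast_fact_ratio i b, cast_fact_ratio j a]
        have hne1 : (i.factorial : ℂ) ≠ 0 := by exact_mod_cast Nat.factorial_ne_zero i
        have hne2 : ((i+b).factorial : ℂ) ≠ 0 := by exact_mod_cast Nat.factorial_ne_zero (i+b)
        have hne3 : (j.factorial : ℂ) ≠ 0 := by exact_mod_cast Nat.factorial_ne_zero j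
        have hne4 : ((j+a).factorial : ℂ) ≠ 0 := by exact_mod_cast Nat.factorial_ne_zero (j+a)
        have hne5 : (((P'' - i).factorial) : ℂ) ≠ 0 := by
          exact_mod_cast Nat.factorial_ne_zero (P'' - i)
        field_simp
      · rw [gco, dif_neg (fun hc => by rw [← hldef, hP'eq] at hc; omega),
            gco, dif_neg (fun hc => by rw [hl2, ← hP2def] at hc; omega)]
        ring
    · have hR0 : gco a b r p0 L ε i (j+a) = 0 := by
        rw [gco, dif_neg (fun hc => by rw [hl2] at hc; omega)]
      rw [hR0, mul_zero]
      by_cases h4 : l ≤ L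
      · have hlL : l = L := by omega
        have hsm : p0 - b*l < b := by
          have h5 : b * (p0/b) ≤ p0 := by
            have := Nat.div_mul_le_self p0 b
            have hc : b * (p0/b) = (p0/b) * b := Nat.mul_comm _ _
            omega
          have h6 : p0 % b < b := Nat.mod_lt _ hb
          have h7 : b * (p0/b) + p0 % b = p0 := Nat.div_add_mod p0 b
          have h8 : b * l = b * (p0/b) := by rw [hlL, hL]
          omega
        rw [gco, dif_neg (fun hc => by rw [← hldef] at hc; omega)]
        ring
      · rw [gco, dif_neg (fun hc => by rw [← hldef] at hc; omega)]
        ring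
  · have hL0 : gco a b r p0 L ε (i+b) j = 0 := by
      rw [gco, dif_neg (fun hc => h1 ⟨hc.1, hc.2.1⟩)]
    have hR0 : gco a b r p0 L ε i (j+a) = 0 := by
      rw [gco, dif_neg]
      intro hc
      obtain ⟨hc1, hc2, _⟩ := hc
      rcases Nat.lt_or_ge j r with hjr | hjr
      · obtain ⟨k, hk⟩ := hc2
        rcases Nat.eq_zero_or_pos k with hk0 | hk0
        · rw [hk0, mul_zero] at hk; omega
        · have h10 : a * 1 ≤ a * k := Nat.mul_le_mul_left a hk0
          have h11 : a * 1 = a := by ring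
          omega
      · refine h1 ⟨hjr, ?_⟩
        obtain ⟨k, hk⟩ := hc2
        rcases Nat.eq_zero_or_pos k with hk0 | hk0
        · rw [hk0, mul_zero] at hk; exfalso; omega
        · refine ⟨k - 1, ?_⟩
          have h9 : a * k = a * (k-1) + a := by
            have h12 : k = (k-1) + 1 := by omega
            conv_lhs => rw [h12]
            ring
          omega
    rw [hL0, hR0, mul_zero, mul_zero]



lemma gco_supp (i j : ℕ) (h : gco a b r p0 L ε i j ≠ 0) : i ≤ p0 ∧ j ≤ r + a*L := by
  rw [gco] at h
  split_ifs at h with hc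
  · obtain ⟨h1, h2, h3, h4⟩ := hc
    refine ⟨by omega, ?_⟩
    have hla : a * ((j-r)/a) = j - r := Nat.mul_div_cancel' h2
    have hle : a * ((j-r)/a) ≤ a * L := Nat.mul_le_mul_left a h3
    omega
  · exact absurd rfl h

lemma gco_bound (i j : ℕ) :
    ‖gco a b r p0 L ε i j‖ ≤ (max 1 (‖ε‖))^p0 := by
  have hM1 : (1:ℝ) ≤ max 1 (‖ε‖) := le_max_left _ _
  have hMp : (1:ℝ) ≤ (max 1 (‖ε‖))^p0 := one_le_pow₀ hM1
  rw [gco]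
  split_ifs with h
  · obtain ⟨h1, h2, h3, h4⟩ := h
    have he : p0 - b*((j-r)/a) - i ≤ p0 := by omega
    rw [norm_div, norm_pow]
    have f1 : (1:ℝ) ≤ (i.factorial : ℝ) := by exact_mod_cast i.factorial_pos
    have f2 : (1:ℝ) ≤ (((p0 - b*((j-r)/a) - i).factorial : ℕ) : ℝ) := by
      exact_mod_cast (p0 - b*((j-r)/a) - i).factorial_pos
    have f3 : (1:ℝ) ≤ (j.factorial : ℝ) := by exact_mod_cast j.factorial_pos
    have hden : (1:ℝ) ≤ ‖(i.factorial : ℂ)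
        * (((p0 - b*((j-r)/a) - i).factorial : ℕ) : ℂ) * (j.factorial : ℂ)‖ := by
      rw [norm_mul, norm_mul, Complex.norm_natCast, Complex.norm_natCast, Complex.norm_natCast]
      nlinarith [mul_le_mul f1 f2 zero_le_one (by linarith : (0:ℝ) ≤ (i.factorial:ℝ))]
    calc ‖ε‖ ^ (p0 - b*((j-r)/a) - i) / ‖(i.factorial : ℂ)
          * (((p0 - b*((j-r)/a) - i).factorial : ℕ) : ℂ) * (j.factorial : ℂ)‖
        ≤ ‖ε‖ ^ (p0 - b*((j-r)/a) - i) :=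
          div_le_self (by positivity) hden
      _ ≤ (max 1 (‖ε‖)) ^ (p0 - b*((j-r)/a) - i) :=
          pow_le_pow_left₀ (norm_nonneg _) (le_max_right _ _) _
      _ ≤ (max 1 (‖ε‖))^p0 := pow_le_pow_right₀ hM1 he
  · simpa using le_trans zero_le_one hMp

lemma gco_0r (hra : 0 < a) (hε : ε ≠ 0) : gco a b r p0 L ε 0 r ≠ 0 := by
  rw [gco, dif_pos ⟨le_refl r, by simp, by simp [Nat.sub_self], by simp⟩]
  apply div_ne_zero
  · simpa using pow_ne_zero _ hε
  · simp [Nat.sub_self]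
    constructor
    · exact_mod_cast Nat.factorial_ne_zero _
    · exact_mod_cast Nat.factorial_ne_zero _
end Construct


/-- If `β = a·n₁ + b·n₂` with `n₁, n₂ ∈ ℕ` and `1 ≤ s < b/a`, then the space of
Gevrey-order-`s` solutions of the hypergeometric system at `p = (ε,0)`, `ε ≠ 0`, has
dimension `1`, and every element of it is a polynomial (has finite support). -/
theorem gevrey_solutions_below_slope_resonant
    (a b : ℕ) (hab : Nat.Coprime a b) (ha : 0 < a) (haltb : a < b)
    (ε : ℂ) (hε : ε ≠ 0) (β : ℂ) (n₁ n₂ : ℕ) (hβ : β = (a : ℂ) * n₁ + (b : ℂ) * n₂)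
    (s : ℝ) (hs1 : 1 ≤ s) (hs2 : s < (b : ℝ) / (a : ℝ)) :
    Module.rank ℂ (GSolP a b β ε s) = 1 ∧
    ∀ f ∈ GSolP a b β ε s, {p : ℕ × ℕ | co f p.1 p.2 ≠ 0}.Finite := by
  classical
  have hb : 0 < b := lt_trans ha haltb
  have hβN : β = ((a*n₁ + b*n₂ : ℕ):ℂ) := by rw [hβ]; push_cast; ring
  set r : ℕ := n₂ % a with hrdef
  set Q : ℕ := n₂ / a with hQdef
  set p0 : ℕ := n₁ + b * Q with hp0def
  set L0 : ℕ := p0 / b with hL0def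
  have hNid : a * p0 + b * r = a*n₁ + b*n₂ := by
    have h1 : a * Q + r = n₂ := Nat.div_add_mod n₂ a
    calc a * p0 + b * r = a*n₁ + b*(a*Q + r) := by rw [hp0def]; ring
      _ = a*n₁ + b*n₂ := by rw [h1]
  have hβg : β = ((a*p0 + b*r : ℕ):ℂ) := by rw [hβN, hNid]
  set g : M2 := mk2 (gco a b r p0 L0 ε) with hgdef
  have hgco : ∀ i j, co g i j = gco a b r p0 L0 ε i j := fun i j => co_mk2 _ i j
  have hgE : ∀ i j, Epco a b β ε g i j = 0 := by
    intro i j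
    have h := gco_E a b r p0 L0 ε ha hb hL0def hβg i j
    unfold Epco
    rw [hgco, hgco]
    exact h
  have hgP : ∀ i j, Pco a b g i j = 0 := by
    intro i j
    have h := gco_P a b r p0 L0 ε ha hb (Nat.mod_lt _ ha) hL0def i j
    unfold Pco
    rw [hgco, hgco, h, sub_self]
  have hgG : GevreyFn s (co g) := by
    refine ⟨(max 1 (‖ε‖))^p0 + 1, 1, by positivity, one_pos, fun i j => ?_⟩
    have h1 : (1:ℝ) ≤ ((j.factorial:ℝ))^(s-1) := by
      have h2 := Real.rpow_le_rpow (zero_le_one)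
        (by exact_mod_cast j.factorial_pos : (1:ℝ) ≤ (j.factorial:ℝ))
        (by linarith : (0:ℝ) ≤ s - 1)
      rwa [Real.one_rpow] at h2
    have h2 := gco_bound a b r p0 L0 ε i j
    rw [hgco]
    have h3 : (0:ℝ) ≤ (max 1 (‖ε‖))^p0 := by positivity
    calc ‖gco a b r p0 L0 ε i j‖ ≤ (max 1 (‖ε‖))^p0 := h2
      _ ≤ ((max 1 (‖ε‖))^p0 + 1) * 1^(i+j) * ((j.factorial:ℝ))^(s-1) := by
          rw [one_pow, mul_one]
          nlinarith
  have hgmem : g ∈ GSolP a b β ε s := ⟨hgG, hgP, hgE⟩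
  have hg0r : co g 0 r ≠ 0 := by rw [hgco]; exact gco_0r a b r p0 L0 ε ha hε
  have hker : ∀ f : M2, f ∈ GSolP a b β ε s → co f 0 r = 0 → f = 0 := by
    intro f hf h0
    obtain ⟨hfG, hfP, hfE⟩ := hf
    exact ext2 f (fun i j => sol_zero hfE hfP hab ha haltb hε hβN hs1 hs2 hfG h0 j i)
  have hmul : ∀ f, f ∈ GSolP a b β ε s → f = (co f 0 r / co g 0 r) • g := by
    intro f hf
    have hsub : f - (co f 0 r / co g 0 r) • g ∈ GSolP a b β ε s :=
      sub_mem hf (Submodule.smul_mem _ _ hgmem)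
    have h0 : co (f - (co f 0 r / co g 0 r) • g) 0 r = 0 := by
      have hc : co (f - (co f 0 r / co g 0 r) • g) 0 r
          = co f 0 r - (co f 0 r / co g 0 r) * co g 0 r := by
        simp [co, map_sub]
      rw [hc]
      rw [div_mul_cancel₀ _ hg0r, sub_self]
    exact sub_eq_zero.mp (hker _ hsub h0)
  constructor
  · let Lm : (GSolP a b β ε s) →ₗ[ℂ] ℂ :=
      { toFun := fun x => co x.1 0 r
        map_add' := fun x y => co_add x.1 y.1 0 r
        map_smul' := fun c x => by simpa using co_smul c x.1 0 r }
    have hinj : Function.Injective Lm := by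
      intro x y hxy
      apply Subtype.ext
      have hsx := hmul x.1 x.2
      have hsy := hmul y.1 y.2
      rw [hsx, hsy]
      have hco : co x.1 0 r = co y.1 0 r := hxy
      rw [hco]
    have hsurj : Function.Surjective Lm := by
      intro c
      refine ⟨⟨(c / co g 0 r) • g, Submodule.smul_mem _ _ hgmem⟩, ?_⟩
      show co ((c / co g 0 r) • g) 0 r = c
      rw [co_smul]
      field_simp
    have e := LinearEquiv.ofBijective Lm ⟨hinj, hsurj⟩
    rw [e.rank_eq, Module.rank_self]
  · intro f hf
    have hfe := hmul f hf
    have hfin : {p : ℕ×ℕ | gco a b r p0 L0 ε p.1 p.2 ≠ 0}.Finite := by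
      apply Set.Finite.subset (Set.Finite.prod (Set.finite_Iic p0) (Set.finite_Iic (r + a*L0)))
      intro p hp
      have h := gco_supp a b r p0 L0 ε p.1 p.2 hp
      exact ⟨h.1, h.2⟩
    apply hfin.subset
    intro p hp
    simp only [Set.mem_setOf_eq] at hp ⊢
    intro hz
    apply hp
    rw [hfe, co_smul, hgco p.1 p.2, hz, mul_zero]

end
end

section
/- Let a and b be coprime integers with 0 < a < b, β ∈ ℂ, ε ∈ ℂ with ε ≠ 0, and let s be a real number with 1 ≤ s < ∞. For every g ∈ ℂ[[t₁,x₂]] that is Gevrey of order s there exists h ∈ ℂ[[t₁,x₂]] Gevrey of order s with E_p h = g. (The Euler operator E_p induces a surjective endomorphism of the space of Gevrey series of order s at the point p = (ε,0).) -/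
noncomputable section

/-- recursive solution coefficients -/
def Hf (a b : ℕ) (β ε : ℂ) (g : M2) : ℕ → ℕ → ℂ
  | 0 => fun _ => 0
  | (i+1) => fun j =>
      (co g i j - (((a*i + b*j : ℕ) : ℂ) - β) * Hf a b β ε g i j) / ((a:ℂ) * ε * ((i:ℂ)+1))

lemma abs_sub_le_abs_add_abs (x y : ℂ) : ‖(x - y)‖ ≤ ‖x‖ + ‖y‖ := by
  simpa using norm_sub_le x y

lemma choose_le_two_pow' (n k : ℕ) : n.choose k ≤ 2 ^ n := by
  rcases le_or_gt n k with h | h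
  · rcases eq_or_lt_of_le h with rfl | h'
    · simpa using Nat.one_le_two_pow
    · simp [Nat.choose_eq_zero_of_lt h']
  · calc n.choose k ≤ ∑ i ∈ Finset.range (n+1), n.choose i :=
        Finset.single_le_sum (fun i _ => Nat.zero_le _) (Finset.mem_range.mpr (by omega))
      _ = 2 ^ n := Nat.sum_range_choose n

set_option maxHeartbeats 1000000 in
/-- The Euler operator `E_p` is surjective on Gevrey series of order `s` at `p = (ε,0)`:
for every `g` Gevrey of order `s` there is `h` Gevrey of order `s` with `E_p h = g`. -/
theorem euler_surjective_on_gevrey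
    (a b : ℕ) (hab : Nat.Coprime a b) (ha : 0 < a) (haltb : a < b)
    (β : ℂ) (ε : ℂ) (hε : ε ≠ 0) (s : ℝ) (hs : 1 ≤ s)
    (g : M2) (hg : GevreyFn s (co g)) :
    ∃ h : M2, GevreyFn s (co h) ∧ ∀ i j : ℕ, Epco a b β ε h i j = co g i j := by
  obtain ⟨C, R, hC, hR, hgb⟩ := hg
  set H : ℕ → ℕ → ℂ := Hf a b β ε g with hH
  set h : M2 := (fun d : Fin 2 →₀ ℕ => H (d 0) (d 1)) with hh
  have hco : ∀ i j : ℕ, co h i j = H i j := by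
    intro i j
    rw [co, MvPowerSeries.coeff_apply]
    simp [hh, co, MvPowerSeries.coeff_apply, Finsupp.single_apply]
  -- denominator
  have hden : ∀ i : ℕ, ((a:ℂ) * ε * ((i:ℂ)+1)) ≠ 0 := by
    intro i
    have h1 : (a:ℂ) ≠ 0 := Nat.cast_ne_zero.mpr ha.ne'
    have h2 : ((i:ℂ)+1) ≠ 0 := by
      have : (((i+1:ℕ)):ℂ) ≠ 0 := Nat.cast_ne_zero.mpr (Nat.succ_ne_zero i)
      push_cast at this; exact this
    exact mul_ne_zero (mul_ne_zero h1 hε) h2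
  refine ⟨h, ?_, ?_⟩
  · -- Gevrey bound
    set A : ℝ := (a:ℝ) * ‖ε‖ with hA
    have hA0 : 0 < A := mul_pos (by exact_mod_cast ha) (norm_pos_iff.mpr hε)
    set K : ℝ := (b:ℝ) + ‖β‖ with hK
    have hK0 : 0 < K := by
      have hb0 : (0:ℝ) < (b:ℝ) := by exact_mod_cast (by omega : 0 < b)
      exact add_pos_of_pos_of_nonneg hb0 (norm_nonneg _)
    set T : ℝ := max R ((K+1)/A) with hT
    have hTR : R ≤ T := le_max_left _ _
    have hTA : K + 1 ≤ T * A := by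
      rw [← div_le_iff₀ hA0]; exact le_max_right _ _
    have hT0 : 0 < T := lt_of_lt_of_le hR hTR
    have key : ∀ i j : ℕ, ‖(H i j)‖ ≤
        C * T ^ (i+j) * ((i+j).choose j : ℝ) * (j.factorial : ℝ) ^ (s-1) := by
      intro i
      induction i with
      | zero =>
        intro j
        have : H 0 j = 0 := rfl
        rw [this]
        simp only [norm_zero]
        positivity
      | succ i ih =>
        intro j
        have hF0 : (0:ℝ) < (j.factorial : ℝ) ^ (s-1) := by
          apply Real.rpow_pos_of_pos
          exact_mod_cast j.factorial_pos
        set F : ℝ := (j.factorial : ℝ) ^ (s-1)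
        set B : ℝ := ((i+j).choose j : ℝ) with hB
        set B' : ℝ := ((i+1+j).choose j : ℝ) with hB'
        have hB1 : (1:ℝ) ≤ B' := by
          rw [hB']
          exact_mod_cast Nat.succ_le_of_lt (Nat.choose_pos (by omega))
        have hB0 : (0:ℝ) ≤ B := Nat.cast_nonneg _
        -- binomial identity
        have hBid : ((i:ℝ)+1) * B' = ((i:ℝ)+(j:ℝ)+1) * B := by
          have hnat : (i+j+1) * ((i+j).choose i) = ((i+j+1).choose (i+1)) * (i+1) :=
            Nat.add_one_mul_choose_eq (i+j) i
          have e1 : (i+j).choose i = (i+j).choose j := Nat.choose_symm_add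
          have e2 : (i+j+1).choose (i+1) = (i+j+1).choose j := by
            have : i+j+1 = (i+1) + j := by omega
            rw [this, Nat.choose_symm_add]
          have e3 : i+1+j = i+j+1 := by omega
          rw [e1, e2] at hnat
          have hnat2 : (i+1) * ((i+1+j).choose j) = (i+j+1) * ((i+j).choose j) := by
            rw [e3, Nat.mul_comm]; exact hnat.symm
          rw [hB, hB']
          exact_mod_cast hnat2
        -- unfold H at succ
        have hrec : H (i+1) j = (co g i j - (((a*i + b*j : ℕ) : ℂ) - β) * H i j)
            / ((a:ℂ) * ε * ((i:ℂ)+1)) := rfl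
        have habsden : ‖((a:ℂ) * ε * ((i:ℂ)+1))‖ = A * ((i:ℝ)+1) := by
          rw [norm_mul, norm_mul]
          have : ‖((i:ℂ)+1)‖ = (i:ℝ)+1 := by
            have : ((i:ℂ)+1) = (((i+1:ℕ)):ℂ) := by push_cast; ring
            rw [this, Complex.norm_natCast]; push_cast; ring
          rw [this, Complex.norm_natCast]
        rw [hrec, norm_div, habsden]
        rw [div_le_iff₀ (by positivity)]
        have hcabs : ‖(((a*i + b*j : ℕ) : ℂ) - β)‖ ≤ K * ((i:ℝ)+(j:ℝ)+1) := by
          calc ‖(((a*i + b*j : ℕ) : ℂ) - β)‖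
              ≤ ‖(((a*i + b*j : ℕ) : ℂ))‖ + ‖β‖ := by
                exact abs_sub_le_abs_add_abs _ _
            _ ≤ K * ((i:ℝ)+(j:ℝ)+1) := by
                rw [Complex.norm_natCast]
                have hb1 : (1:ℝ) ≤ (b:ℝ) := by exact_mod_cast (by omega : 1 ≤ b)
                have hai : (a:ℝ) ≤ (b:ℝ) := by exact_mod_cast haltb.le
                have h0β : 0 ≤ ‖β‖ := norm_nonneg _
                have hi0 : (0:ℝ) ≤ (i:ℝ) := Nat.cast_nonneg _
                have hj0 : (0:ℝ) ≤ (j:ℝ) := Nat.cast_nonneg _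
                push_cast
                rw [hK]
                nlinarith
        calc ‖(co g i j - (((a*i + b*j : ℕ) : ℂ) - β) * H i j)‖
            ≤ ‖(co g i j)‖
              + ‖(((a*i + b*j : ℕ) : ℂ) - β)‖ * ‖(H i j)‖ := by
              rw [← norm_mul]; exact abs_sub_le_abs_add_abs _ _
          _ ≤ C * R ^ (i+j) * F + (K * ((i:ℝ)+(j:ℝ)+1)) * (C * T ^ (i+j) * B * F) := by
              refine add_le_add (hgb i j) (mul_le_mul hcabs (ih j) (norm_nonneg _) ?_)
              positivity
          _ ≤ C * T ^ (i+1+j) * B' * F * (A * ((i:ℝ)+1)) := by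
              have hRT : R ^ (i+j) ≤ T ^ (i+j) := pow_le_pow_left₀ hR.le hTR _
              have hTn : (0:ℝ) < T ^ (i+j) := pow_pos hT0 _
              have e : C * T ^ (i+1+j) * B' * F * (A * ((i:ℝ)+1))
                  = (T * A) * (C * T ^ (i+j) * F * (B' * ((i:ℝ)+1))) := by
                have : i+1+j = (i+j)+1 := by omega
                rw [this]; ring
              rw [e]
              have step1 : (K + 1) * (C * T ^ (i+j) * F * (B' * ((i:ℝ)+1)))
                  ≤ (T * A) * (C * T ^ (i+j) * F * (B' * ((i:ℝ)+1))) := by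
                apply mul_le_mul_of_nonneg_right hTA
                have : (1:ℝ) ≤ B' * ((i:ℝ)+1) := by nlinarith [Nat.cast_nonneg (α := ℝ) i]
                positivity
              refine le_trans ?_ step1
              have expand : (K + 1) * (C * T ^ (i+j) * F * (B' * ((i:ℝ)+1)))
                  = C * T ^ (i+j) * F * (B' * ((i:ℝ)+1))
                    + K * (C * T ^ (i+j) * F * (((i:ℝ)+1) * B')) := by ring
              rw [expand]
              have h1 : C * R ^ (i+j) * F ≤ C * T ^ (i+j) * F * (B' * ((i:ℝ)+1)) := by
                have hb : (1:ℝ) ≤ B' * ((i:ℝ)+1) := by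
                  nlinarith [Nat.cast_nonneg (α := ℝ) i]
                have t1 : C * R ^ (i+j) * F ≤ C * T ^ (i+j) * F :=
                  mul_le_mul_of_nonneg_right
                    (mul_le_mul_of_nonneg_left hRT hC.le) hF0.le
                have t2 : C * T ^ (i+j) * F ≤ C * T ^ (i+j) * F * (B' * ((i:ℝ)+1)) :=
                  le_mul_of_one_le_right (by positivity) hb
                linarith
              have h2 : (K * ((i:ℝ)+(j:ℝ)+1)) * (C * T ^ (i+j) * B * F)
                  = K * (C * T ^ (i+j) * F * (((i:ℝ)+1) * B')) := by
                rw [hBid]; ring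
              linarith
    refine ⟨C, 2*T, hC, by positivity, ?_⟩
    intro i j
    rw [hco]
    calc ‖(H i j)‖
        ≤ C * T ^ (i+j) * ((i+j).choose j : ℝ) * (j.factorial : ℝ) ^ (s-1) := key i j
      _ ≤ C * (2*T) ^ (i+j) * (j.factorial : ℝ) ^ (s-1) := by
          have hch : ((i+j).choose j : ℝ) ≤ (2:ℝ) ^ (i+j) := by
            exact_mod_cast choose_le_two_pow' (i+j) j
          have hF0 : (0:ℝ) < (j.factorial : ℝ) ^ (s-1) := by
            apply Real.rpow_pos_of_pos; exact_mod_cast j.factorial_pos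
          have : C * T ^ (i+j) * ((i+j).choose j : ℝ) ≤ C * (2*T) ^ (i+j) := by
            rw [mul_pow]
            calc C * T ^ (i+j) * ((i+j).choose j : ℝ)
                ≤ C * T ^ (i+j) * (2:ℝ) ^ (i+j) :=
                  mul_le_mul_of_nonneg_left hch (by positivity)
              _ = C * ((2:ℝ) ^ (i+j) * T ^ (i+j)) := by ring
          nlinarith
  · -- the equation
    intro i j
    rw [Epco, hco, hco]
    have hrec : H (i+1) j = (co g i j - (((a*i + b*j : ℕ) : ℂ) - β) * H i j)
        / ((a:ℂ) * ε * ((i:ℂ)+1)) := rfl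
    rw [hrec, mul_div_cancel₀ _ (hden i)]
    ring


end
end

section
/- Let a and b be coprime integers with 0 < a < b, β ∈ ℂ, ε ∈ ℂ with ε ≠ 0, and let s ≥ b/a be a real number. If f, g ∈ ℂ[[t₁,x₂]] are Gevrey of order s and satisfy (E_p + ab) f = P g, i.e. coefficientwise (a·i + b·j − β + ab)·f_{(i,j)} + a·ε·(i+1)·f_{(i+1,j)} = (P g)_{(i,j)} for all i, j, then there exists h ∈ ℂ[[t₁,x₂]] Gevrey of order s with P h = f and E_p h = g. (This expresses the vanishing Ext¹(M_A(β), O_{X̂|Y}(s))_p = 0 for s ≥ b/a.) -/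
noncomputable section

namespace Ext1

variable (a b : ℕ) (β ε : ℂ) (f g : M2)

/-- Column recursion solving `E_p h = g` in column `j` with base value `z`. -/
def colF (j : ℕ) (z : ℂ) : ℕ → ℂ
  | 0 => z
  | i + 1 => (co g i j - (((a * i + b * j : ℕ) : ℂ) - β) * colF j z i)
      / ((a : ℂ) * ε * ((i : ℂ) + 1))

/-- Base-row recursion step. -/
def step (j : ℕ) (z : ℂ) : ℂ :=
  ((b.factorial : ℂ) * colF a b β ε g j z b - co f 0 j)
    * ((j.factorial : ℂ) / ((j + a).factorial : ℂ))

def H0aux : ℕ → ℕ → ℂ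
  | 0, _ => 0
  | n + 1, j => if j < a then 0 else step a b β ε f g (j - a) (H0aux n (j - a))

def H0 (j : ℕ) : ℂ := H0aux a b β ε f g j j

def HH (i j : ℕ) : ℂ := colF a b β ε g j (H0 a b β ε f g j) i

lemma H0aux_lt {j : ℕ} (hj : j < a) (n : ℕ) : H0aux a b β ε f g n j = 0 := by
  cases n <;> simp [H0aux, hj]

lemma H0aux_stable (ha : 0 < a) : ∀ j n, j ≤ n →
    H0aux a b β ε f g n j = H0 a b β ε f g j := by
  intro j
  induction j using Nat.strong_induction_on with
  | _ j ih =>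
    intro n hn
    by_cases hj : j < a
    · rw [H0aux_lt a b β ε f g hj, H0, H0aux_lt a b β ε f g hj]
    · push_neg at hj
      obtain ⟨n, rfl⟩ : ∃ m, n = m + 1 := ⟨n - 1, by omega⟩
      obtain ⟨m, hm⟩ : ∃ m, j = m + 1 := ⟨j - 1, by omega⟩
      have h1 : H0aux a b β ε f g (n + 1) j
          = step a b β ε f g (j - a) (H0aux a b β ε f g n (j - a)) := by
        rw [H0aux, if_neg (by omega)]
      have h2 : H0 a b β ε f g j
          = step a b β ε f g (j - a) (H0aux a b β ε f g m (j - a)) := by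
        rw [H0, hm, H0aux, if_neg (by omega), ← hm]
      rw [h1, h2, ih (j - a) (by omega) n (by omega), ih (j - a) (by omega) m (by omega)]

lemma H0_lt {j : ℕ} (hj : j < a) : H0 a b β ε f g j = 0 := by
  rw [H0, H0aux_lt a b β ε f g hj]

lemma H0_step (ha : 0 < a) (j : ℕ) :
    H0 a b β ε f g (j + a) = step a b β ε f g j (H0 a b β ε f g j) := by
  obtain ⟨m, hm⟩ : ∃ m, j + a = m + 1 := ⟨j + a - 1, by omega⟩
  rw [H0, hm, H0aux, if_neg (by omega)]
  have h3 : j + a - a = j := by omega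
  rw [← hm, h3, H0aux_stable a b β ε f g ha j m (by omega)]

def hsol : M2 := fun d => HH a b β ε f g (d 0) (d 1)

lemma co_hsol (i j : ℕ) : co (hsol a b β ε f g) i j = HH a b β ε f g i j := by
  rw [co, MvPowerSeries.coeff_apply]
  simp [hsol, Finsupp.add_apply, Finsupp.single_apply]

lemma fdiv_cast (n k : ℕ) : (((n + k).factorial / n.factorial : ℕ) : ℂ)
    = ((n + k).factorial : ℂ) / (n.factorial : ℂ) := by
  rw [Nat.cast_div (Nat.factorial_dvd_factorial (by omega))
    (by exact_mod_cast Nat.factorial_ne_zero n)]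

lemma HH_zero (j : ℕ) : HH a b β ε f g 0 j = H0 a b β ε f g j := rfl

lemma HH_succ (i j : ℕ) : HH a b β ε f g (i + 1) j
    = (co g i j - (((a * i + b * j : ℕ) : ℂ) - β) * HH a b β ε f g i j)
      / ((a : ℂ) * ε * ((i : ℂ) + 1)) := rfl

lemma den_ne (ha : 0 < a) (hε : ε ≠ 0) (i : ℕ) : (a : ℂ) * ε * ((i : ℂ) + 1) ≠ 0 := by
  have h1 : (a : ℂ) ≠ 0 := Nat.cast_ne_zero.mpr ha.ne'
  exact mul_ne_zero (mul_ne_zero h1 hε) (Nat.cast_add_one_ne_zero i)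

lemma e1 (ha : 0 < a) (hε : ε ≠ 0) (i j : ℕ) :
    co g i j = (((a * i + b * j : ℕ) : ℂ) - β) * HH a b β ε f g i j
    + (a : ℂ) * ε * ((i : ℂ) + 1) * HH a b β ε f g (i + 1) j := by
  have hd := den_ne a ε ha hε i
  rw [HH_succ]
  rw [mul_div_assoc', mul_div_cancel_left₀ _ hd]; ring

lemma ep_eq (ha : 0 < a) (hε : ε ≠ 0) (i j : ℕ) :
    Epco a b β ε (hsol a b β ε f g) i j = co g i j := by
  rw [Epco, co_hsol, co_hsol, e1 a b β ε f g ha hε i j]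

lemma hrel (i b : ℕ) : (((i + 1 + b).factorial / (i + 1).factorial : ℕ) : ℂ) * ((i : ℂ) + 1)
    = (((i + b).factorial / i.factorial : ℕ) : ℂ) * ((i : ℂ) + (b : ℂ) + 1) := by
  rw [fdiv_cast, fdiv_cast]
  have h1 : (i + 1 + b).factorial = (i + b + 1) * (i + b).factorial := by
    rw [show i + 1 + b = (i + b) + 1 by omega, Nat.factorial_succ]
  have h2 : (i + 1).factorial = (i + 1) * i.factorial := Nat.factorial_succ i
  have h4 : ((i : ℂ) + 1) ≠ 0 := Nat.cast_add_one_ne_zero i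
  have h5 : (i.factorial : ℂ) ≠ 0 := by exact_mod_cast Nat.factorial_ne_zero _
  rw [h1, h2]
  push_cast
  field_simp

lemma key (ha : 0 < a) (hε : ε ≠ 0)
    (hfg : ∀ i j : ℕ,
      (((a * i + b * j : ℕ) : ℂ) - β + (a : ℂ) * (b : ℂ)) * co f i j
        + (a : ℂ) * ε * ((i : ℂ) + 1) * co f (i + 1) j = Pco a b g i j)
    (i j : ℕ) :
    (((a * i + b * j : ℕ) : ℂ) - β + (a : ℂ) * (b : ℂ))
        * (Pco a b (hsol a b β ε f g) i j - co f i j)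
      + (a : ℂ) * ε * ((i : ℂ) + 1)
        * (Pco a b (hsol a b β ε f g) (i + 1) j - co f (i + 1) j) = 0 := by
  have h1 := e1 a b β ε f g ha hε (i + b) j
  have h2 := e1 a b β ε f g ha hε i (j + a)
  have h3 := hfg i j
  have hr := hrel i b
  rw [Pco] at h3
  simp only [Pco, co_hsol, show i + 1 + b = i + b + 1 from by omega] at *
  push_cast at h1 h2 h3 ⊢
  linear_combination (-(((i + b).factorial / i.factorial : ℕ) : ℂ)) * h1
    + (((j + a).factorial / j.factorial : ℕ) : ℂ) * h2 - h3
    + (a : ℂ) * ε * HH a b β ε f g (i + b + 1) j * hr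

lemma u_zero (ha : 0 < a) (hε : ε ≠ 0) (j : ℕ) :
    Pco a b (hsol a b β ε f g) 0 j = co f 0 j := by
  have hstep := H0_step a b β ε f g ha j
  rw [step] at hstep
  have h1 : (((j + a).factorial : ℂ)) ≠ 0 := by exact_mod_cast Nat.factorial_ne_zero _
  have h2 : ((j.factorial : ℂ)) ≠ 0 := by exact_mod_cast Nat.factorial_ne_zero _
  rw [Pco]
  simp only [Nat.zero_add, Nat.factorial_zero, Nat.div_one]
  rw [co_hsol, co_hsol, HH_zero, hstep, fdiv_cast]
  have hc : colF a b β ε g j (H0 a b β ε f g j) b = HH a b β ε f g b j := rfl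
  rw [hc]
  field_simp
  ring

lemma p_eq (ha : 0 < a) (hε : ε ≠ 0)
    (hfg : ∀ i j : ℕ,
      (((a * i + b * j : ℕ) : ℂ) - β + (a : ℂ) * (b : ℂ)) * co f i j
        + (a : ℂ) * ε * ((i : ℂ) + 1) * co f (i + 1) j = Pco a b g i j)
    (i j : ℕ) : Pco a b (hsol a b β ε f g) i j = co f i j := by
  induction i with
  | zero => exact u_zero a b β ε f g ha hε j
  | succ i ih =>
    have hk := key a b β ε f g ha hε hfg i j
    rw [ih] at hk
    have hd := den_ne a ε ha hε i
    have h0 : (a : ℂ) * ε * ((i : ℂ) + 1)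
        * (Pco a b (hsol a b β ε f g) (i + 1) j - co f (i + 1) j) = 0 := by
      linear_combination hk
    rcases mul_eq_zero.mp h0 with h | h
    · exact absurd h hd
    · linear_combination h

/-! ### Estimates -/

lemma pow_fact_le (j : ℕ) : ∀ a : ℕ, (j + 1) ^ a * j.factorial ≤ (j + a).factorial := by
  intro a
  induction a with
  | zero => simp
  | succ a ih =>
    have h1 : (j + 1) ^ (a + 1) * j.factorial = (j + 1) * ((j + 1) ^ a * j.factorial) := by ring
    rw [h1, show j + (a + 1) = (j + a) + 1 by omega, Nat.factorial_succ]
    exact Nat.mul_le_mul (by omega) ih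

lemma one_le_fact_rpow {s : ℝ} (hs1 : 1 ≤ s) (n : ℕ) :
    (1:ℝ) ≤ (n.factorial : ℝ) ^ (s - 1) := by
  have := Real.rpow_le_rpow zero_le_one (Nat.one_le_cast.mpr n.factorial_pos)
    (by linarith : (0:ℝ) ≤ s - 1)
  simpa using this

lemma key_rpow {s : ℝ} (hs1 : 1 ≤ s) (a b : ℕ) (hb : (b:ℝ) ≤ (a:ℝ) * s) (j : ℕ) :
    ((j.factorial : ℝ)) ^ (s-1) * ((j:ℝ)+1) ^ b * (j.factorial : ℝ)
      ≤ (((j+a).factorial : ℝ)) ^ (s-1) * (((j+a).factorial : ℝ)) := by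
  have hj0 : (0:ℝ) < (j.factorial : ℝ) := by exact_mod_cast j.factorial_pos
  have hja0 : (0:ℝ) < ((j+a).factorial : ℝ) := by exact_mod_cast (j+a).factorial_pos
  have e1 : ((j.factorial : ℝ)) ^ (s-1) * (j.factorial : ℝ) = (j.factorial : ℝ) ^ s := by
    rw [← Real.rpow_add_one hj0.ne']; ring_nf
  have e2 : (((j+a).factorial : ℝ)) ^ (s-1) * ((j+a).factorial : ℝ)
      = ((j+a).factorial : ℝ) ^ s := by
    rw [← Real.rpow_add_one hja0.ne']; ring_nf
  have hx1 : (1:ℝ) ≤ (j:ℝ) + 1 := by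
    have := Nat.cast_nonneg (α := ℝ) j; linarith
  have hstep1 : ((j:ℝ)+1) ^ b ≤ ((j:ℝ)+1) ^ ((a:ℝ) * s) := by
    rw [← Real.rpow_natCast ((j:ℝ)+1) b]
    exact Real.rpow_le_rpow_of_exponent_le hx1 (by exact_mod_cast hb)
  have hstep2 : ((j:ℝ)+1) ^ ((a:ℝ) * s) = (((j:ℝ)+1) ^ (a:ℕ)) ^ s := by
    rw [← Real.rpow_natCast ((j:ℝ)+1) a, ← Real.rpow_mul (by positivity)]
  have hstep3 : (j.factorial : ℝ) ^ s * (((j:ℝ)+1) ^ (a:ℕ)) ^ s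
      = (((j:ℝ)+1) ^ (a:ℕ) * (j.factorial : ℝ)) ^ s := by
    rw [← Real.mul_rpow (by positivity) (by positivity)]; ring_nf
  have hnat : (((j:ℝ)+1) ^ (a:ℕ) * (j.factorial : ℝ)) ≤ ((j+a).factorial : ℝ) := by
    exact_mod_cast pow_fact_le j a
  calc ((j.factorial : ℝ)) ^ (s-1) * ((j:ℝ)+1) ^ b * (j.factorial : ℝ)
      = (j.factorial : ℝ) ^ s * ((j:ℝ)+1) ^ b := by rw [← e1]; ring
    _ ≤ (j.factorial : ℝ) ^ s * (((j:ℝ)+1) ^ (a:ℕ)) ^ s := by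
        refine mul_le_mul_of_nonneg_left (le_trans hstep1 (le_of_eq hstep2)) ?_
        positivity
    _ = (((j:ℝ)+1) ^ (a:ℕ) * (j.factorial : ℝ)) ^ s := hstep3
    _ ≤ ((j+a).factorial : ℝ) ^ s :=
        Real.rpow_le_rpow (by positivity) hnat (by linarith)
    _ = _ := e2.symm

lemma choose_le_two_pow (n k : ℕ) : n.choose k ≤ 2 ^ n := by
  rcases le_or_gt k n with h | h
  · calc n.choose k ≤ ∑ m ∈ Finset.range (n+1), n.choose m :=
        Finset.single_le_sum (f := fun m => n.choose m) (fun m _ => Nat.zero_le _)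
          (Finset.mem_range.mpr (by omega))
    _ = 2 ^ n := Nat.sum_range_choose n
  · rw [Nat.choose_eq_zero_of_lt h]; exact Nat.zero_le _

lemma col_bound (ha : 0 < a) (hε : ε ≠ 0)
    (T K : ℝ) (hK : 0 ≤ K) (hT2 : 2 ≤ T * ‖ε‖) (M j : ℕ)
    (hbase : ‖H0 a b β ε f g j‖ ≤ K)
    (hgcol : ∀ i : ℕ, ‖co g i j‖ ≤ K * T ^ i)
    (hw : ∀ i : ℕ, ‖((a * i + b * j : ℕ) : ℂ) - β‖
        ≤ (a : ℝ) * ((i : ℝ) + 1 + (M : ℝ))) :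
    ∀ i : ℕ, ‖HH a b β ε f g i j‖ ≤ K * T ^ i * ((i + M).choose i : ℝ) := by
  have hε0 : 0 < ‖ε‖ := norm_pos_iff.mpr hε
  have hT0 : 0 < T := by nlinarith
  have ha1 : (1:ℝ) ≤ (a:ℝ) := by exact_mod_cast ha
  intro i
  induction i with
  | zero => simpa [HH_zero] using hbase
  | succ i ih =>
    have hC1 : (1:ℝ) ≤ (((i+1) + M).choose (i+1) : ℝ) := by
      exact_mod_cast Nat.one_le_iff_ne_zero.mpr (Nat.choose_pos (by omega)).ne'
    have hCi : (0:ℝ) ≤ ((i + M).choose i : ℝ) := by positivity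
    have hCC : ((i:ℝ)+1) * (((i+1) + M).choose (i+1) : ℝ)
        = ((i:ℝ)+1+(M:ℝ)) * ((i + M).choose i : ℝ) := by
      have h0 := Nat.add_one_mul_choose_eq (i + M) i
      have h' : (i + M + 1) * ((i+M).choose i) = (((i+1)+M).choose (i+1)) * (i+1) := by
        simpa [Nat.succ_eq_add_one, show i + M + 1 = (i+1)+M by omega] using h0
      have h'' := congrArg (fun n : ℕ => (n : ℝ)) h'
      push_cast at h''
      linear_combination -h''
    have hden : ‖(a:ℂ) * ε * ((i:ℂ)+1)‖ = (a:ℝ) * ‖ε‖ * ((i:ℝ)+1) := by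
      rw [norm_mul, norm_mul, show ((i:ℂ)+1) = ((i+1:ℕ):ℂ) by push_cast; ring,
        Complex.norm_natCast, Complex.norm_natCast]
      push_cast; ring
    have hdpos : 0 < (a:ℝ) * ‖ε‖ * ((i:ℝ)+1) := by positivity
    rw [HH_succ, norm_div, hden, div_le_iff₀ hdpos]
    have habs : ‖co g i j - ((((a * i + b * j : ℕ) : ℂ)) - β) * HH a b β ε f g i j‖
        ≤ K * T ^ i + ((a:ℝ) * ((i:ℝ)+1+(M:ℝ))) * (K * T ^ i * ((i + M).choose i : ℝ)) := by
      calc ‖co g i j - ((((a * i + b * j : ℕ) : ℂ)) - β) * HH a b β ε f g i j‖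
          ≤ ‖co g i j‖
            + ‖((((a * i + b * j : ℕ) : ℂ)) - β) * HH a b β ε f g i j‖ := by
            simpa [sub_eq_add_neg] using norm_add_le (co g i j)
              (-(((((a * i + b * j : ℕ) : ℂ)) - β) * HH a b β ε f g i j))
        _ ≤ K * T ^ i + ((a:ℝ) * ((i:ℝ)+1+(M:ℝ))) * (K * T ^ i * ((i + M).choose i : ℝ)) := by
            rw [norm_mul]
            exact add_le_add (hgcol i)
              (mul_le_mul (hw i) ih (norm_nonneg _) (by positivity))
    refine le_trans habs ?_
    have e2 : ((a:ℝ) * ((i:ℝ)+1+(M:ℝ))) * (K * T ^ i * ((i + M).choose i : ℝ))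
        = (a:ℝ) * ((i:ℝ)+1) * (K * T ^ i * (((i+1) + M).choose (i+1) : ℝ)) := by
      linear_combination (-((a:ℝ) * (K * T ^ i))) * hCC
    rw [e2, pow_succ]
    have hTi : (0:ℝ) ≤ K * T ^ i := by positivity
    have hA : (1:ℝ) ≤ (a:ℝ) * ((i:ℝ)+1) := by nlinarith [Nat.cast_nonneg (α := ℝ) i]
    have hprod : (1:ℝ) ≤ (((i+1) + M).choose (i+1) : ℝ) * ((a:ℝ) * ((i:ℝ)+1)) := by
      nlinarith
    have h5 := mul_le_mul_of_nonneg_left hprod hTi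
    have h6 := mul_le_mul_of_nonneg_left hT2
      (by positivity : (0:ℝ) ≤ (K * T ^ i) * ((((i+1) + M).choose (i+1) : ℝ)) * ((a:ℝ) * ((i:ℝ)+1)))
    nlinarith [h5, h6]

end Ext1

open Ext1

set_option maxHeartbeats 1000000

/-- Vanishing `Ext¹(M_A(β), O_{X̂|Y}(s))_p = 0` for `s ≥ b/a`: if `f, g` are Gevrey of order
`s` and `(E_p + ab) f = P g`, then there is `h` Gevrey of order `s` with `P h = f` and
`E_p h = g`. -/
theorem ext_one_gevrey_vanishes_above_slope
    (a b : ℕ) (hab : Nat.Coprime a b) (ha : 0 < a) (haltb : a < b)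
    (β : ℂ) (ε : ℂ) (hε : ε ≠ 0) (s : ℝ) (hs : (b : ℝ) / (a : ℝ) ≤ s)
    (f g : M2) (hf : GevreyFn s (co f)) (hg : GevreyFn s (co g))
    (hfg : ∀ i j : ℕ,
      (((a * i + b * j : ℕ) : ℂ) - β + (a : ℂ) * (b : ℂ)) * co f i j
        + (a : ℂ) * ε * ((i : ℂ) + 1) * co f (i + 1) j = Pco a b g i j) :
    ∃ h : M2, GevreyFn s (co h) ∧
      (∀ i j : ℕ, Pco a b h i j = co f i j) ∧
      (∀ i j : ℕ, Epco a b β ε h i j = co g i j) := by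
  classical
  obtain ⟨Cf, Rf, hCf, hRf, hfb⟩ := hf
  obtain ⟨Cg, Rg, hCg, hRg, hgb⟩ := hg
  have haR : (0:ℝ) < (a:ℝ) := by exact_mod_cast ha
  have ha1 : (1:ℝ) ≤ (a:ℝ) := by exact_mod_cast ha
  have hbR : (a:ℝ) < (b:ℝ) := by exact_mod_cast haltb
  have hs1 : 1 ≤ s := le_trans ((one_le_div haR).mpr hbR.le) hs
  have hbas : (b:ℝ) ≤ (a:ℝ) * s := by
    rw [div_le_iff₀ haR] at hs; linarith
  have hE1 : ∀ n : ℕ, (1:ℝ) ≤ (n.factorial : ℝ) ^ (s - 1) := one_le_fact_rpow hs1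
  have hE0 : ∀ n : ℕ, (0:ℝ) ≤ (n.factorial : ℝ) ^ (s - 1) := fun n => le_trans zero_le_one (hE1 n)
  obtain ⟨C₀, hC₀def⟩ : ∃ x : ℝ, x = max Cf Cg + 1 := ⟨_, rfl⟩
  obtain ⟨R₀, hR₀def⟩ : ∃ x : ℝ, x = max Rf Rg + 1 := ⟨_, rfl⟩
  have hC₀1 : 1 ≤ C₀ := by
    have : 0 < max Cf Cg := lt_max_of_lt_left hCf
    rw [hC₀def]; linarith
  have hC₀ : 0 < C₀ := lt_of_lt_of_le zero_lt_one hC₀1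
  have hR₀1 : 1 ≤ R₀ := by
    have : 0 < max Rf Rg := lt_max_of_lt_left hRf
    rw [hR₀def]; linarith
  have hR₀ : 0 < R₀ := lt_of_lt_of_le zero_lt_one hR₀1
  have hfb' : ∀ i j : ℕ, ‖co f i j‖
      ≤ C₀ * R₀ ^ (i + j) * (j.factorial : ℝ) ^ (s - 1) := by
    intro i j
    refine le_trans (hfb i j) ?_
    have h1 : Cf ≤ C₀ := by
      rw [hC₀def]; have := le_max_left Cf Cg; linarith
    have h2 : Rf ^ (i+j) ≤ R₀ ^ (i+j) := by
      refine pow_le_pow_left₀ hRf.le ?_ _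
      rw [hR₀def]; have := le_max_left Rf Rg; linarith
    have := mul_le_mul (mul_le_mul h1 h2 (by positivity) hC₀.le) (le_refl ((j.factorial : ℝ) ^ (s - 1))) (hE0 j) (by positivity)
    linarith
  have hgb' : ∀ i j : ℕ, ‖co g i j‖
      ≤ C₀ * R₀ ^ (i + j) * (j.factorial : ℝ) ^ (s - 1) := by
    intro i j
    refine le_trans (hgb i j) ?_
    have h1 : Cg ≤ C₀ := by
      rw [hC₀def]; have := le_max_right Cf Cg; linarith
    have h2 : Rg ^ (i+j) ≤ R₀ ^ (i+j) := by
      refine pow_le_pow_left₀ hRg.le ?_ _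
      rw [hR₀def]; have := le_max_right Rf Rg; linarith
    have := mul_le_mul (mul_le_mul h1 h2 (by positivity) hC₀.le) (le_refl ((j.factorial : ℝ) ^ (s - 1))) (hE0 j) (by positivity)
    linarith
  obtain ⟨B0, hB0def⟩ : ∃ x : ℕ, x = ⌈‖β‖⌉₊ + a + b + 1 := ⟨_, rfl⟩
  have hB0 : ‖β‖ ≤ (B0:ℝ) := by
    refine le_trans (Nat.le_ceil _) ?_
    rw [hB0def]; push_cast
    have := Nat.cast_nonneg (α := ℝ) a
    have := Nat.cast_nonneg (α := ℝ) b
    linarith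
  have hε0 : 0 < ‖ε‖ := norm_pos_iff.mpr hε
  obtain ⟨T, hTdef⟩ : ∃ x : ℝ, x = R₀ + 2 / ‖ε‖ + 2 := ⟨_, rfl⟩
  have hT0 : 0 < T := by rw [hTdef]; positivity
  have hR₀T : R₀ ≤ T := by
    have : 0 ≤ 2 / ‖ε‖ := by positivity
    rw [hTdef]; linarith
  have hT1 : 1 ≤ T := le_trans hR₀1 hR₀T
  have hT2 : 2 ≤ T * ‖ε‖ := by
    have h1 : (2 / ‖ε‖) * ‖ε‖ = 2 := div_mul_cancel₀ _ hε0.ne'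
    have h2 : 0 < R₀ * ‖ε‖ := by positivity
    rw [hTdef]
    nlinarith
  have hw : ∀ i j : ℕ, ‖((a * i + b * j : ℕ) : ℂ) - β‖
      ≤ (a:ℝ) * ((i:ℝ) + 1 + ((b*j + B0 : ℕ) : ℝ)) := by
    intro i j
    have h1 : ‖((a * i + b * j : ℕ) : ℂ) - β‖
        ≤ ((a * i + b * j : ℕ) : ℝ) + ‖β‖ := by
      calc ‖((a * i + b * j : ℕ) : ℂ) - β‖
          ≤ ‖((a * i + b * j : ℕ) : ℂ)‖ + ‖β‖ := by
            simpa [sub_eq_add_neg] using norm_add_le ((a * i + b * j : ℕ) : ℂ) (-β)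
        _ = ((a * i + b * j : ℕ) : ℝ) + ‖β‖ := by rw [Complex.norm_natCast]
    refine le_trans h1 ?_
    push_cast
    have hi0 := Nat.cast_nonneg (α := ℝ) i
    have hj0 := Nat.cast_nonneg (α := ℝ) j
    have hb0 := Nat.cast_nonneg (α := ℝ) b
    have hB00 := Nat.cast_nonneg (α := ℝ) B0
    nlinarith [mul_nonneg (mul_nonneg (sub_nonneg.mpr ha1) hb0) hj0,
      mul_nonneg (sub_nonneg.mpr ha1) hB00, hB0]
  -- K function
  obtain ⟨Kf, hKfdef⟩ : ∃ x : ℕ → ℝ, x = fun j => ‖H0 a b β ε f g j‖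
      + C₀ * R₀ ^ j * (j.factorial : ℝ) ^ (s - 1) := ⟨_, rfl⟩
  have hKfj : ∀ j, Kf j = ‖H0 a b β ε f g j‖
      + C₀ * R₀ ^ j * (j.factorial : ℝ) ^ (s - 1) := fun j => by rw [hKfdef]
  have hKf0 : ∀ j, 0 ≤ Kf j := by
    intro j; rw [hKfj]
    have := norm_nonneg (H0 a b β ε f g j)
    have h2 : 0 ≤ C₀ * R₀ ^ j * (j.factorial : ℝ) ^ (s - 1) := by positivity
    linarith
  have hKfbase : ∀ j, ‖H0 a b β ε f g j‖ ≤ Kf j := by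
    intro j; rw [hKfj]
    have h2 : 0 ≤ C₀ * R₀ ^ j * (j.factorial : ℝ) ^ (s - 1) := by positivity
    linarith
  have hKfg : ∀ j, C₀ * R₀ ^ j * (j.factorial : ℝ) ^ (s - 1) ≤ Kf j := by
    intro j; rw [hKfj]
    have := norm_nonneg (H0 a b β ε f g j)
    linarith
  have hgcol : ∀ j i : ℕ, ‖co g i j‖ ≤ Kf j * T ^ i := by
    intro j i
    calc ‖co g i j‖ ≤ C₀ * R₀ ^ (i + j) * (j.factorial : ℝ) ^ (s - 1) := hgb' i j
      _ = (C₀ * R₀ ^ j * (j.factorial : ℝ) ^ (s - 1)) * R₀ ^ i := by rw [pow_add]; ring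
      _ ≤ Kf j * T ^ i := by
          refine mul_le_mul (hKfg j) (pow_le_pow_left₀ hR₀.le hR₀T i) (by positivity) (hKf0 j)
  have colb : ∀ j i : ℕ, ‖HH a b β ε f g i j‖
      ≤ Kf j * T ^ i * ((i + (b*j + B0)).choose i : ℝ) := fun j =>
    col_bound a b β ε f g ha hε T (Kf j) (hKf0 j) hT2 (b*j + B0) j (hKfbase j) (hgcol j)
      (fun i => hw i j)
  -- base row bound
  obtain ⟨c2, hc2def⟩ : ∃ x : ℝ, x = ((2*b + B0 : ℕ) : ℝ) := ⟨_, rfl⟩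
  have hc20 : 0 ≤ c2 := by rw [hc2def]; exact Nat.cast_nonneg _
  obtain ⟨D, hDdef⟩ : ∃ x : ℝ, x = (b.factorial : ℝ) * T ^ b * c2 ^ b + 1 := ⟨_, rfl⟩
  have hD1 : 1 ≤ D := by
    have : 0 ≤ (b.factorial : ℝ) * T ^ b * c2 ^ b := by positivity
    rw [hDdef]; linarith
  have hD0 : 0 < D := lt_of_lt_of_le zero_lt_one hD1
  obtain ⟨R₁, hR₁def⟩ : ∃ x : ℝ, x = max (max R₀ (2*D)) 1 := ⟨_, rfl⟩
  have hR₁1 : 1 ≤ R₁ := by rw [hR₁def]; exact le_max_right _ _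
  have hR₁0 : 0 < R₁ := lt_of_lt_of_le zero_lt_one hR₁1
  have hR₀R₁ : R₀ ≤ R₁ := by rw [hR₁def]; exact le_trans (le_max_left _ _) (le_max_left _ _)
  have h2DR₁ : 2*D ≤ R₁ := by rw [hR₁def]; exact le_trans (le_max_right _ _) (le_max_left _ _)
  have base : ∀ j : ℕ, ‖H0 a b β ε f g j‖
      ≤ C₀ * R₁ ^ j * (j.factorial : ℝ) ^ (s - 1) := by
    intro j
    induction j using Nat.strong_induction_on with
    | _ j ih =>
      by_cases hj : j < a
      · rw [H0_lt a b β ε f g hj]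
        simp only [norm_zero]
        positivity
      · push_neg at hj
        obtain ⟨j', rfl⟩ : ∃ j', j = j' + a := ⟨j - a, by omega⟩
        have ihj := ih j' (by omega)
        have hstep := H0_step a b β ε f g ha j'
        rw [step] at hstep
        have hcol : colF a b β ε g j' (H0 a b β ε f g j') b = HH a b β ε f g b j' := rfl
        rw [hcol] at hstep
        rw [hstep]
        have hP0 : (0:ℝ) < (j'.factorial : ℝ) := by exact_mod_cast j'.factorial_pos
        have hQ0 : (0:ℝ) < ((j'+a).factorial : ℝ) := by exact_mod_cast (j'+a).factorial_pos
        have habs : ‖((b.factorial : ℂ) * HH a b β ε f g b j' - co f 0 j')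
              * ((j'.factorial : ℂ) / ((j' + a).factorial : ℂ))‖
            ≤ ((b.factorial : ℝ) * ‖HH a b β ε f g b j'‖
              + ‖co f 0 j'‖) * ((j'.factorial : ℝ) / ((j'+a).factorial : ℝ)) := by
          rw [norm_mul, norm_div, Complex.norm_natCast, Complex.norm_natCast]
          refine mul_le_mul_of_nonneg_right ?_ (by positivity)
          calc ‖(b.factorial : ℂ) * HH a b β ε f g b j' - co f 0 j'‖
              ≤ ‖(b.factorial : ℂ) * HH a b β ε f g b j'‖
                + ‖co f 0 j'‖ := by
                simpa [sub_eq_add_neg] using norm_add_le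
                  ((b.factorial : ℂ) * HH a b β ε f g b j') (-(co f 0 j'))
            _ = (b.factorial : ℝ) * ‖HH a b β ε f g b j'‖
                + ‖co f 0 j'‖ := by rw [norm_mul, Complex.norm_natCast]
        refine le_trans habs ?_
        -- bound the bracket
        have hHHb := colb j' b
        have hchoose : ((b + (b*j' + B0)).choose b : ℝ) ≤ (c2 * ((j':ℝ)+1)) ^ b := by
          calc ((b + (b*j' + B0)).choose b : ℝ) ≤ (((b + (b*j' + B0)) ^ b : ℕ) : ℝ) := by
                exact_mod_cast Nat.choose_le_pow (b + (b*j' + B0)) b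
            _ = ((b + (b*j' + B0) : ℕ) : ℝ) ^ b := by push_cast; ring
            _ ≤ (c2 * ((j':ℝ)+1)) ^ b := by
                refine pow_le_pow_left₀ (Nat.cast_nonneg _) ?_ _
                rw [hc2def]; push_cast
                have hj0 := Nat.cast_nonneg (α := ℝ) j'
                have hb0 := Nat.cast_nonneg (α := ℝ) b
                have hB00 := Nat.cast_nonneg (α := ℝ) B0
                nlinarith [mul_nonneg hb0 hj0, mul_nonneg hB00 hj0]
        have hKj' : Kf j' ≤ 2 * C₀ * R₁ ^ j' * (j'.factorial : ℝ) ^ (s - 1) := by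
          have h2 : C₀ * R₀ ^ j' ≤ C₀ * R₁ ^ j' := by
            refine mul_le_mul_of_nonneg_left (pow_le_pow_left₀ hR₀.le hR₀R₁ j') hC₀.le
          rw [hKfj]
          have h3 : C₀ * R₀ ^ j' * (j'.factorial : ℝ) ^ (s - 1)
              ≤ C₀ * R₁ ^ j' * (j'.factorial : ℝ) ^ (s - 1) :=
            mul_le_mul_of_nonneg_right h2 (hE0 j')
          linarith
        have hEx : (0:ℝ) ≤ (j'.factorial : ℝ) ^ (s - 1) := hE0 j'
        have hx1 : (1:ℝ) ≤ (j':ℝ) + 1 := by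
          have := Nat.cast_nonneg (α := ℝ) j'; linarith
        have hx0 : (0:ℝ) ≤ (j':ℝ) + 1 := by linarith
        have hxb1 : (1:ℝ) ≤ ((j':ℝ)+1) ^ b := by
          calc (1:ℝ) = 1 ^ b := (one_pow b).symm
            _ ≤ ((j':ℝ)+1) ^ b := pow_le_pow_left₀ zero_le_one hx1 b
        have hZ0 : (0:ℝ) ≤ 2 * C₀ * R₁ ^ j' * ((j'.factorial : ℝ) ^ (s - 1) * ((j':ℝ)+1) ^ b) :=
          mul_nonneg (mul_nonneg (mul_nonneg (by norm_num : (0:ℝ) ≤ 2) hC₀.le)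
            (pow_nonneg hR₁0.le j')) (mul_nonneg hEx (by positivity))
        have hb1' : ‖HH a b β ε f g b j'‖
            ≤ 2 * C₀ * R₁ ^ j' * (j'.factorial : ℝ) ^ (s - 1)
              * (T ^ b * (c2 ^ b * ((j':ℝ)+1) ^ b)) := by
          calc ‖HH a b β ε f g b j'‖
              ≤ Kf j' * T ^ b * ((b + (b*j' + B0)).choose b : ℝ) := hHHb
            _ ≤ (2 * C₀ * R₁ ^ j' * (j'.factorial : ℝ) ^ (s - 1)) * T ^ b
                  * (c2 ^ b * ((j':ℝ)+1) ^ b) := by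
                refine mul_le_mul ?_ ?_ (Nat.cast_nonneg _) ?_
                · exact mul_le_mul_of_nonneg_right hKj' (by positivity)
                · calc ((b + (b*j' + B0)).choose b : ℝ) ≤ (c2 * ((j':ℝ)+1)) ^ b := hchoose
                    _ = c2 ^ b * ((j':ℝ)+1) ^ b := mul_pow _ _ _
                · have h9 : (0:ℝ) ≤ 2 * C₀ * R₁ ^ j' * (j'.factorial : ℝ) ^ (s - 1) :=
                    mul_nonneg (mul_nonneg (mul_nonneg (by norm_num : (0:ℝ) ≤ 2) hC₀.le)
                      (pow_nonneg hR₁0.le j')) hEx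
                  exact mul_nonneg h9 (by positivity)
            _ = 2 * C₀ * R₁ ^ j' * (j'.factorial : ℝ) ^ (s - 1)
                  * (T ^ b * (c2 ^ b * ((j':ℝ)+1) ^ b)) := by ring
        have hb2 : (b.factorial : ℝ) * ‖HH a b β ε f g b j'‖
            ≤ ((b.factorial : ℝ) * T ^ b * c2 ^ b)
              * (2 * C₀ * R₁ ^ j' * ((j'.factorial : ℝ) ^ (s - 1) * ((j':ℝ)+1) ^ b)) := by
          calc (b.factorial : ℝ) * ‖HH a b β ε f g b j'‖
              ≤ (b.factorial : ℝ) * (2 * C₀ * R₁ ^ j' * (j'.factorial : ℝ) ^ (s - 1)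
                  * (T ^ b * (c2 ^ b * ((j':ℝ)+1) ^ b))) :=
                mul_le_mul_of_nonneg_left hb1' (Nat.cast_nonneg _)
            _ = ((b.factorial : ℝ) * T ^ b * c2 ^ b)
                  * (2 * C₀ * R₁ ^ j' * ((j'.factorial : ℝ) ^ (s - 1) * ((j':ℝ)+1) ^ b)) := by
                ring
        have hff : ‖co f 0 j'‖
            ≤ 2 * C₀ * R₁ ^ j' * ((j'.factorial : ℝ) ^ (s - 1) * ((j':ℝ)+1) ^ b) := by
          have h10 : ‖co f 0 j'‖ ≤ C₀ * R₀ ^ j' * (j'.factorial : ℝ) ^ (s - 1) := by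
            have := hfb' 0 j'
            rwa [Nat.zero_add] at this
          have h11 : C₀ * R₀ ^ j' ≤ 2 * C₀ * R₁ ^ j' := by
            have h12 := mul_le_mul_of_nonneg_left (pow_le_pow_left₀ hR₀.le hR₀R₁ j') hC₀.le
            have h12b : (0:ℝ) ≤ C₀ * R₁ ^ j' := mul_nonneg hC₀.le (pow_nonneg hR₁0.le j')
            linarith only [h12, h12b]
          have h13 : C₀ * R₀ ^ j' * (j'.factorial : ℝ) ^ (s - 1)
              ≤ 2 * C₀ * R₁ ^ j' * (j'.factorial : ℝ) ^ (s - 1) :=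
            mul_le_mul_of_nonneg_right h11 hEx
          have h14 : 2 * C₀ * R₁ ^ j' * (j'.factorial : ℝ) ^ (s - 1)
              ≤ 2 * C₀ * R₁ ^ j' * ((j'.factorial : ℝ) ^ (s - 1) * ((j':ℝ)+1) ^ b) := by
            have h15 : (0:ℝ) ≤ 2 * C₀ * R₁ ^ j' * (j'.factorial : ℝ) ^ (s - 1) :=
              mul_nonneg (mul_nonneg (mul_nonneg (by norm_num : (0:ℝ) ≤ 2) hC₀.le)
                (pow_nonneg hR₁0.le j')) hEx
            linarith only [mul_le_mul_of_nonneg_left hxb1 h15]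
          linarith only [h10, h13, h14]
        have hsum : (b.factorial : ℝ) * ‖HH a b β ε f g b j'‖
              + ‖co f 0 j'‖
            ≤ D * (2 * C₀ * R₁ ^ j' * ((j'.factorial : ℝ) ^ (s - 1) * ((j':ℝ)+1) ^ b)) := by
          have hDZ : D * (2 * C₀ * R₁ ^ j' * ((j'.factorial : ℝ) ^ (s - 1) * ((j':ℝ)+1) ^ b))
              = ((b.factorial : ℝ) * T ^ b * c2 ^ b)
                  * (2 * C₀ * R₁ ^ j' * ((j'.factorial : ℝ) ^ (s - 1) * ((j':ℝ)+1) ^ b))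
                + (2 * C₀ * R₁ ^ j' * ((j'.factorial : ℝ) ^ (s - 1) * ((j':ℝ)+1) ^ b)) := by
            rw [hDdef]; ring
          linarith only [hDZ, hb2, hff]
        have hPQ0 : (0:ℝ) ≤ (j'.factorial : ℝ) / ((j'+a).factorial : ℝ) := by positivity
        have hmul := mul_le_mul_of_nonneg_right hsum hPQ0
        refine le_trans hmul ?_
        -- key rpow step
        have hkey := key_rpow hs1 a b hbas j'
        have h7 : ((j'.factorial : ℝ) ^ (s - 1) * ((j':ℝ)+1) ^ b)
              * ((j'.factorial : ℝ) / ((j'+a).factorial : ℝ))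
            ≤ ((j'+a).factorial : ℝ) ^ (s - 1) := by
          rw [mul_div_assoc']
          rw [div_le_iff₀ hQ0]
          exact hkey
        have h2Da : 2*D ≤ R₁ ^ a := by
          calc 2*D ≤ R₁ := h2DR₁
            _ = R₁ ^ 1 := (pow_one R₁).symm
            _ ≤ R₁ ^ a := pow_le_pow_right₀ hR₁1 ha
        have e5 : D * (2 * C₀ * R₁ ^ j' * ((j'.factorial : ℝ) ^ (s - 1) * ((j':ℝ)+1) ^ b)) * ((j'.factorial : ℝ) / ((j'+a).factorial : ℝ)) = (2 * D * C₀ * R₁ ^ j') * (((j'.factorial : ℝ) ^ (s - 1) * ((j':ℝ)+1) ^ b) * ((j'.factorial : ℝ) / ((j'+a).factorial : ℝ))) := by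
          ring
        rw [e5]
        have e6 : (2 * D * C₀ * R₁ ^ j') * (((j'.factorial : ℝ) ^ (s - 1) * ((j':ℝ)+1) ^ b) * ((j'.factorial : ℝ) / ((j'+a).factorial : ℝ))) ≤ (2 * D * C₀ * R₁ ^ j') * (((j'+a).factorial : ℝ) ^ (s - 1)) := by
          refine mul_le_mul_of_nonneg_left h7 ?_
          exact mul_nonneg (mul_nonneg (mul_nonneg (by norm_num : (0:ℝ) ≤ 2) hD0.le) hC₀.le)
            (pow_nonneg hR₁0.le j')
        refine le_trans e6 ?_
        have hEa : (0:ℝ) ≤ ((j'+a).factorial : ℝ) ^ (s - 1) := hE0 _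
        have h16 : 2 * D * C₀ * R₁ ^ j' ≤ C₀ * R₁ ^ (j' + a) := by
          rw [pow_add]
          have h17 := mul_le_mul_of_nonneg_left h2Da (mul_nonneg hC₀.le (pow_nonneg hR₁0.le j'))
          linarith only [h17]
        exact mul_le_mul_of_nonneg_right h16 hEa
  -- global Kf bound
  have Kfle : ∀ j : ℕ, Kf j ≤ 2 * C₀ * R₁ ^ j * (j.factorial : ℝ) ^ (s - 1) := by
    intro j
    have h2 : C₀ * R₀ ^ j ≤ C₀ * R₁ ^ j :=
      mul_le_mul_of_nonneg_left (pow_le_pow_left₀ hR₀.le hR₀R₁ j) hC₀.le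
    have h3 : C₀ * R₀ ^ j * (j.factorial : ℝ) ^ (s - 1)
        ≤ C₀ * R₁ ^ j * (j.factorial : ℝ) ^ (s - 1) := mul_le_mul_of_nonneg_right h2 (hE0 j)
    have h4 := base j
    rw [hKfj]
    linarith
  -- final constants
  obtain ⟨Cc, hCcdef⟩ : ∃ x : ℝ, x = 2 * C₀ * (2:ℝ) ^ B0 := ⟨_, rfl⟩
  obtain ⟨Rr, hRrdef⟩ : ∃ x : ℝ, x = 2 * T + (2:ℝ) ^ b * R₁ := ⟨_, rfl⟩
  have hCc0 : 0 < Cc := by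
    have : (0:ℝ) < (2:ℝ) ^ B0 := by positivity
    rw [hCcdef]; nlinarith
  have hRr0 : 0 < Rr := by
    have h1 : (0:ℝ) < (2:ℝ) ^ b * R₁ := by positivity
    rw [hRrdef]; nlinarith
  have h2T : 2 * T ≤ Rr := by
    have h1 : (0:ℝ) < (2:ℝ) ^ b * R₁ := by positivity
    rw [hRrdef]; linarith
  have h2bR : (2:ℝ) ^ b * R₁ ≤ Rr := by
    rw [hRrdef]; linarith
  have final : ∀ i j : ℕ, ‖HH a b β ε f g i j‖
      ≤ Cc * Rr ^ (i + j) * (j.factorial : ℝ) ^ (s - 1) := by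
    intro i j
    have hch2 : ((i + (b*j + B0)).choose i : ℝ) ≤ (2:ℝ) ^ (i + (b*j + B0)) := by
      calc ((i + (b*j + B0)).choose i : ℝ) ≤ ((2 ^ (i + (b*j + B0)) : ℕ) : ℝ) := by
            exact_mod_cast choose_le_two_pow (i + (b*j + B0)) i
        _ = (2:ℝ) ^ (i + (b*j + B0)) := by push_cast; ring
    have hKT0 : (0:ℝ) ≤ Kf j * T ^ i := mul_nonneg (hKf0 j) (by positivity)
    calc ‖HH a b β ε f g i j‖
        ≤ Kf j * T ^ i * ((i + (b*j + B0)).choose i : ℝ) := colb j i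
      _ ≤ (2 * C₀ * R₁ ^ j * (j.factorial : ℝ) ^ (s - 1)) * T ^ i
            * (2:ℝ) ^ (i + (b*j + B0)) := by
          refine mul_le_mul ?_ hch2 (Nat.cast_nonneg _) ?_
          · exact mul_le_mul_of_nonneg_right (Kfle j) (by positivity)
          · have h9 : (0:ℝ) ≤ 2 * C₀ * R₁ ^ j * (j.factorial : ℝ) ^ (s - 1) :=
              mul_nonneg (mul_nonneg (mul_nonneg (by norm_num : (0:ℝ) ≤ 2) hC₀.le)
                (pow_nonneg hR₁0.le j)) (hE0 j)
            exact mul_nonneg h9 (by positivity)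
      _ = Cc * ((2*T) ^ i * ((2:ℝ)^b * R₁) ^ j) * (j.factorial : ℝ) ^ (s - 1) := by
          rw [pow_add, pow_add, pow_mul, mul_pow, mul_pow]
          rw [hCcdef]; ring
      _ ≤ Cc * (Rr ^ i * Rr ^ j) * (j.factorial : ℝ) ^ (s - 1) := by
          refine mul_le_mul_of_nonneg_right (mul_le_mul_of_nonneg_left ?_ hCc0.le) (hE0 j)
          refine mul_le_mul (pow_le_pow_left₀ (by linarith) h2T i)
            (pow_le_pow_left₀ (by positivity) h2bR j) (by positivity) (by positivity)
      _ = Cc * Rr ^ (i + j) * (j.factorial : ℝ) ^ (s - 1) := by rw [pow_add]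
  exact ⟨hsol a b β ε f g,
    ⟨Cc, Rr, hCc0, hRr0, fun i j => by rw [co_hsol]; exact final i j⟩,
    fun i j => p_eq a b β ε f g ha hε hfg i j,
    fun i j => ep_eq a b β ε f g ha hε i j⟩

end
end

section
/- Let a and b be coprime integers with 0 < a < b, β ∈ ℂ, k ∈ {0,1,…,a−1}, and let s ≥ b/a be a real number. Let f, h : ℕ → ℂ be sequences satisfying the recurrence h_{m+1} · ((k+a(m+1))! / (k+am)!) = ((β − bk)/a − bm)_b · h_m − f_m for all m ∈ ℕ. If there exist C̃, D̃ > 0 with |f_m| ≤ C̃ · D̃^m · ((k+am)!)^{s−1} for all m, then there exist C, D > 0 with |h_m| ≤ C · D^m · ((k+am)!)^{s−1} for all m. -/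
lemma descPoch_abs_le (n : ℕ) (z : ℂ) :
    ‖(descPochhammer ℂ n).eval z‖ ≤ (‖z‖ + n) ^ n := by
  induction n with
  | zero => simp
  | succ n ih =>
    rw [descPochhammer_succ_eval, norm_mul]
    have h1 : ‖z - (n : ℂ)‖ ≤ ‖z‖ + n := by
      calc ‖z - (n : ℂ)‖ ≤ ‖z‖ + ‖(n : ℂ)‖ :=
            norm_sub_le _ _
        _ = ‖z‖ + n := by simp
    have h2 : (‖z‖ + (n:ℝ)) ^ n ≤ (‖z‖ + (n+1:ℕ)) ^ n := by
      apply pow_le_pow_left₀ (by positivity)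
      push_cast; linarith
    calc ‖(descPochhammer ℂ n).eval z‖ * ‖z - (n:ℂ)‖
        ≤ (‖z‖ + (n+1:ℕ)) ^ n * (‖z‖ + (n+1:ℕ)) := by
          apply mul_le_mul (le_trans ih h2) (h1.trans (by push_cast; linarith))
            (by positivity) (by positivity)
      _ = (‖z‖ + (n+1:ℕ)) ^ (n+1) := by ring

set_option maxHeartbeats 1000000 in
/-- Gevrey growth propagates through the recurrence
`h_{m+1}·((k+a(m+1))!/(k+am)!) = ((β-bk)/a - bm)_b · h_m - f_m`: if `|f_m| ≤ C̃·D̃^m·((k+am)!)^{s-1}`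
for some `C̃, D̃ > 0`, then `|h_m| ≤ C·D^m·((k+am)!)^{s-1}` for some `C, D > 0`, provided
`s ≥ b/a`. -/
theorem recurrence_preserves_gevrey_growth
    (a b : ℕ) (hab : Nat.Coprime a b) (ha : 0 < a) (haltb : a < b)
    (β : ℂ) (k : ℕ) (hk : k < a) (s : ℝ) (hs : (b : ℝ) / (a : ℝ) ≤ s)
    (f h : ℕ → ℂ)
    (hrec : ∀ m : ℕ,
      h (m + 1) * (((k + a * (m + 1)).factorial / (k + a * m).factorial : ℕ) : ℂ) =
        (descPochhammer ℂ b).eval ((β - (b : ℂ) * (k : ℂ)) / (a : ℂ) - (b : ℂ) * (m : ℂ)) * h m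
          - f m)
    (hf : ∃ Ct Dt : ℝ, 0 < Ct ∧ 0 < Dt ∧
      ∀ m : ℕ, ‖f m‖ ≤ Ct * Dt ^ m * (((k + a * m).factorial : ℝ)) ^ (s - 1)) :
    ∃ C D : ℝ, 0 < C ∧ 0 < D ∧
      ∀ m : ℕ, ‖h m‖ ≤ C * D ^ m * (((k + a * m).factorial : ℝ)) ^ (s - 1) := by
  obtain ⟨Ct, Dt, hCt, hDt, hfb⟩ := hf
  have ha' : (0:ℝ) < a := by exact_mod_cast ha
  have hb0 : 0 < b := lt_trans ha haltb
  have hb' : (0:ℝ) < b := by exact_mod_cast hb0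
  have hs1 : 1 < s := by
    have : (1:ℝ) < (b:ℝ)/(a:ℝ) := by
      rw [lt_div_iff₀ ha']; exact_mod_cast by simpa using haltb
    linarith
  have hbas : (b:ℝ) ≤ (a:ℝ) * s := by
    rw [div_le_iff₀ ha'] at hs; linarith
  set E : ℝ := ‖(β - (b:ℂ)*(k:ℂ))/(a:ℂ)‖ + b with hEdef
  have hE0 : 0 < E := by positivity
  set D : ℝ := Dt + E^b + 1 with hDdef
  have hD0 : 0 < D := by positivity
  have hkfac : (0:ℝ) < (k.factorial : ℝ) := by exact_mod_cast k.factorial_pos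
  set C : ℝ := Ct + (‖h 0‖ + 1) * ((k.factorial : ℝ)) ^ (1 - s) with hCdef
  have hC0 : 0 < C := by positivity
  have hCtC : Ct ≤ C := by
    have : 0 ≤ (‖h 0‖ + 1) * ((k.factorial : ℝ)) ^ (1 - s) := by positivity
    linarith
  refine ⟨C, D, hC0, hD0, ?_⟩
  intro m
  induction m with
  | zero =>
    have hk0 : k + a * 0 = k := by ring
    rw [hk0, pow_zero, mul_one]
    have hmul : ((k.factorial : ℝ)) ^ (1 - s) * ((k.factorial : ℝ)) ^ (s - 1) = 1 := by
      rw [← Real.rpow_add hkfac]; norm_num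
    have h1 : ‖h 0‖ + 1 =
        (‖h 0‖ + 1) * ((k.factorial : ℝ)) ^ (1 - s) * ((k.factorial : ℝ)) ^ (s - 1) := by
      rw [mul_assoc, hmul, mul_one]
    have h2 : 0 ≤ Ct * ((k.factorial : ℝ)) ^ (s - 1) := by positivity
    calc ‖h 0‖ ≤ ‖h 0‖ + 1 := by linarith
      _ = (‖h 0‖ + 1) * ((k.factorial : ℝ)) ^ (1 - s)
            * ((k.factorial : ℝ)) ^ (s - 1) := h1
      _ ≤ C * ((k.factorial : ℝ)) ^ (s - 1) := by
          rw [hCdef, add_mul]; linarith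
  | succ m ih =>
    set F : ℕ := (k + a * m).factorial with hFdef
    set G : ℕ := (k + a * (m+1)).factorial with hGdef
    set q : ℕ := G / F with hqdef
    have hle : k + a * m ≤ k + a * (m+1) := by
      have : a * m ≤ a * (m+1) := Nat.mul_le_mul_left _ (by omega); omega
    have hdvd : F ∣ G := Nat.factorial_dvd_factorial hle
    have hqmul : F * q = G := Nat.mul_div_cancel' hdvd
    have hF0 : 0 < F := Nat.factorial_pos _
    have hG0 : 0 < G := Nat.factorial_pos _
    have hq1 : (k + a * m + 1)^a ≤ q := by
      have key : F * (k + a * m + 1)^a ≤ (k + a*m + a).factorial :=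
        Nat.factorial_mul_pow_le_factorial
      have heq : k + a*m + a = k + a*(m+1) := by ring
      rw [heq, ← hGdef, ← hqmul] at key
      exact Nat.le_of_mul_le_mul_left key hF0
    have hq2 : (m+1)^a ≤ q := by
      refine le_trans (Nat.pow_le_pow_left ?_ a) hq1
      have : m ≤ a * m := Nat.le_mul_of_pos_left m ha
      omega
    have hq0 : 0 < q := lt_of_lt_of_le (Nat.pow_pos (n := a) (by omega)) hq2
    have hQ0 : (0:ℝ) < (q:ℝ) := by exact_mod_cast hq0
    have hQ1 : (1:ℝ) ≤ (q:ℝ) := by exact_mod_cast hq0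
    have hFR : (0:ℝ) < (F:ℝ) := by exact_mod_cast hF0
    -- factor the rpow
    have hGF : (G:ℝ) = (F:ℝ) * (q:ℝ) := by exact_mod_cast hqmul.symm
    have hrpow : ((G:ℝ)) ^ (s-1) = ((F:ℝ)) ^ (s-1) * ((q:ℝ)) ^ (s-1) := by
      rw [hGF, Real.mul_rpow (le_of_lt hFR) (le_of_lt hQ0)]
    -- bound on the Pochhammer factor
    set z : ℂ := (β - (b:ℂ)*(k:ℂ))/(a:ℂ) - (b:ℂ)*(m:ℂ) with hzdef
    have hPz : ‖(descPochhammer ℂ b).eval z‖ ≤ (E * (m+1))^b := by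
      refine le_trans (descPoch_abs_le b z) ?_
      apply pow_le_pow_left₀ (by positivity)
      have hz1 : ‖z‖ ≤ ‖(β - (b:ℂ)*(k:ℂ))/(a:ℂ)‖ + b * m := by
        calc ‖z‖ ≤ ‖(β - (b:ℂ)*(k:ℂ))/(a:ℂ)‖
              + ‖(b:ℂ)*(m:ℂ)‖ := norm_sub_le _ _
          _ = ‖(β - (b:ℂ)*(k:ℂ))/(a:ℂ)‖ + b * m := by
              simp [norm_mul, Complex.norm_natCast]
      have hm0 : (0:ℝ) ≤ (m:ℝ) := Nat.cast_nonneg m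
      have hEb : 0 ≤ ‖(β - (b:ℂ)*(k:ℂ))/(a:ℂ)‖ := by positivity
      calc ‖z‖ + b ≤ ‖(β - (b:ℂ)*(k:ℂ))/(a:ℂ)‖ + b * m + b := by linarith
        _ ≤ E * (m+1) := by rw [hEdef]; nlinarith
    -- induction on |f m|
    have hfm : ‖f m‖ ≤ C * D^m * ((F:ℝ))^(s-1) := by
      refine le_trans (hfb m) ?_
      have hFnn : (0:ℝ) ≤ ((F:ℝ))^(s-1) := by positivity
      have hDtD : Dt ≤ D := by rw [hDdef]; nlinarith [pow_pos hE0 b]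
      have : Ct * Dt^m ≤ C * D^m :=
        mul_le_mul hCtC (pow_le_pow_left₀ (le_of_lt hDt) hDtD m) (by positivity) (le_of_lt hC0)
      exact mul_le_mul_of_nonneg_right this hFnn
    -- the key multiplied inequality
    have hrecm := hrec m
    rw [← hqdef] at hrecm
    have habs : ‖h (m+1)‖ * (q:ℝ) ≤
        (E*(m+1))^b * ‖h m‖ + ‖f m‖ := by
      have : ‖h (m+1) * (q:ℂ)‖ = ‖h (m+1)‖ * (q:ℝ) := by
        rw [norm_mul, Complex.norm_natCast]
      rw [← this, hrecm]
      refine le_trans (norm_sub_le _ _) ?_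
      have h3 : ‖(descPochhammer ℂ b).eval z * h m‖ ≤
          (E*(m+1))^b * ‖h m‖ := by
        rw [norm_mul]
        exact mul_le_mul_of_nonneg_right hPz (norm_nonneg _)
      exact add_le_add_left h3 _
    -- power comparison: (m+1)^b ≤ q^(s-1) * q
    have hpowQ : ((m+1:ℕ):ℝ)^b ≤ ((q:ℝ))^(s-1) * (q:ℝ) := by
      have e1 : ((q:ℝ))^(s-1) * (q:ℝ) = ((q:ℝ))^s := by
        nth_rewrite 2 [← Real.rpow_one (q:ℝ)]
        rw [← Real.rpow_add hQ0]; ring_nf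
      rw [e1]
      have hm1 : (1:ℝ) ≤ ((m+1:ℕ):ℝ) := by exact_mod_cast Nat.one_le_iff_ne_zero.mpr (by omega)
      have h2 : (((m+1:ℕ):ℝ)^a)^s ≤ ((q:ℝ))^s := by
        apply Real.rpow_le_rpow (by positivity) (by exact_mod_cast hq2) (by linarith)
      refine le_trans ?_ h2
      rw [← Real.rpow_natCast ((m+1:ℕ):ℝ) a, ← Real.rpow_natCast ((m+1:ℕ):ℝ) b,
        ← Real.rpow_mul (by linarith)]
      exact Real.rpow_le_rpow_of_exponent_le hm1 hbas
    -- combine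
    have key : ‖h (m+1)‖ * (q:ℝ) ≤
        C * D^(m+1) * ((F:ℝ))^(s-1) * (((q:ℝ))^(s-1) * (q:ℝ)) := by
      have hFnn : (0:ℝ) ≤ ((F:ℝ))^(s-1) := by positivity
      have hm1b : (1:ℝ) ≤ ((m+1:ℕ):ℝ)^b := one_le_pow₀ (by exact_mod_cast Nat.succ_le_succ (Nat.zero_le m))
      have step1 : (E*(m+1))^b * ‖h m‖ + ‖f m‖ ≤
          C * D^m * ((F:ℝ))^(s-1) * ((m+1:ℕ):ℝ)^b * (E^b + 1) := by
        have t1 : (E*(m+1))^b * ‖h m‖ ≤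
            E^b * ((m+1:ℕ):ℝ)^b * (C * D^m * ((F:ℝ))^(s-1)) := by
          rw [mul_pow]
          push_cast
          exact mul_le_mul_of_nonneg_left ih (by positivity)
        have t2 : ‖f m‖ ≤ C * D^m * ((F:ℝ))^(s-1) * ((m+1:ℕ):ℝ)^b := by
          refine le_trans hfm ?_
          nth_rewrite 1 [← mul_one (C * D^m * ((F:ℝ))^(s-1))]
          exact mul_le_mul_of_nonneg_left hm1b (by positivity)
        calc (E*(m+1))^b * ‖h m‖ + ‖f m‖
            ≤ E^b * ((m+1:ℕ):ℝ)^b * (C * D^m * ((F:ℝ))^(s-1))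
              + C * D^m * ((F:ℝ))^(s-1) * ((m+1:ℕ):ℝ)^b := by linarith
          _ = C * D^m * ((F:ℝ))^(s-1) * ((m+1:ℕ):ℝ)^b * (E^b + 1) := by ring
      have step2 : C * D^m * ((F:ℝ))^(s-1) * ((m+1:ℕ):ℝ)^b * (E^b + 1) ≤
          C * D^(m+1) * ((F:ℝ))^(s-1) * ((m+1:ℕ):ℝ)^b := by
        have hED : E^b + 1 ≤ D := by rw [hDdef]; linarith
        calc C * D^m * ((F:ℝ))^(s-1) * ((m+1:ℕ):ℝ)^b * (E^b + 1)
            ≤ C * D^m * ((F:ℝ))^(s-1) * ((m+1:ℕ):ℝ)^b * D := by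
              exact mul_le_mul_of_nonneg_left hED (by positivity)
          _ = C * D^(m+1) * ((F:ℝ))^(s-1) * ((m+1:ℕ):ℝ)^b := by ring
      have step3 : C * D^(m+1) * ((F:ℝ))^(s-1) * ((m+1:ℕ):ℝ)^b ≤
          C * D^(m+1) * ((F:ℝ))^(s-1) * (((q:ℝ))^(s-1) * (q:ℝ)) :=
        mul_le_mul_of_nonneg_left hpowQ (by positivity)
      exact le_trans habs (le_trans step1 (le_trans step2 step3))
    -- conclude by dividing by q
    have final : ‖h (m+1)‖ ≤ C * D^(m+1) * ((F:ℝ))^(s-1) * ((q:ℝ))^(s-1) := by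
      have hring : C * D^(m+1) * ((F:ℝ))^(s-1) * (((q:ℝ))^(s-1) * (q:ℝ)) =
          (C * D^(m+1) * ((F:ℝ))^(s-1) * ((q:ℝ))^(s-1)) * (q:ℝ) := by ring
      rw [hring] at key
      exact le_of_mul_le_mul_right key hQ0
    rw [hrpow]
    calc ‖h (m+1)‖ ≤ C * D^(m+1) * ((F:ℝ))^(s-1) * ((q:ℝ))^(s-1) := final
      _ = C * D^(m+1) * (((F:ℝ))^(s-1) * ((q:ℝ))^(s-1)) := by ring
end

section
/- Let a and b be coprime integers with 0 < a < b, let β ∈ ℂ and k ∈ {0,1,…,a−1} be such that (β − bk)/a ∉ ℕ, and let s be a real number with 1 ≤ s < b/a. Let f : ℕ → ℂ be a sequence such that |f_r| ≤ C · D^r · ((k+ar)!)^{s−1} for some C, D > 0 and all r ∈ ℕ. Then ((β − bk)/a)_{b(r+1)} ≠ 0 for every r ∈ ℕ, and the series Σ_{r≥0} (k+ar)! · f_r / ((β − bk)/a)_{b(r+1)} converges absolutely. -/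
lemma descPochhammer_eval_prod_aux (x : ℂ) (n : ℕ) :
    (descPochhammer ℂ n).eval x = ∏ i ∈ Finset.range n, (x - i) := by
  induction n with
  | zero => simp
  | succ n ih =>
    rw [descPochhammer_succ_right, Finset.prod_range_succ, ← ih]
    simp [mul_comm]

lemma factorial_add_le_aux (n m : ℕ) : (n + m).factorial ≤ n.factorial * (n + m) ^ m := by
  induction m with
  | zero => simp
  | succ m ih =>
    rw [← Nat.add_assoc, Nat.factorial_succ, pow_succ]
    calc (n + m + 1) * (n + m).factorial ≤ (n + m + 1) * (n.factorial * (n + m) ^ m) :=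
          Nat.mul_le_mul_left _ ih
      _ ≤ (n + m + 1) * (n.factorial * (n + m + 1) ^ m) :=
          Nat.mul_le_mul_left _ (Nat.mul_le_mul_left _ (Nat.pow_le_pow_left (by omega) m))
      _ = n.factorial * ((n + m + 1) ^ m * (n + m + 1)) := by ring

set_option maxHeartbeats 1000000 in
/-- For `(β - bk)/a ∉ ℕ` and `1 ≤ s < b/a`, if `|f_r| ≤ C·D^r·((k+ar)!)^{s-1}`, then all the
Pochhammer values `((β - bk)/a)_{b(r+1)}` are nonzero and the series
`Σ_r (k+ar)!·f_r / ((β - bk)/a)_{b(r+1)}` converges absolutely. -/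
theorem lambda_k_series_converges
    (a b : ℕ) (hab : Nat.Coprime a b) (ha : 0 < a) (haltb : a < b)
    (β : ℂ) (k : ℕ) (hk : k < a)
    (hβ : ∀ n : ℕ, (β - (b : ℂ) * (k : ℂ)) / (a : ℂ) ≠ (n : ℂ))
    (s : ℝ) (hs1 : 1 ≤ s) (hs2 : s < (b : ℝ) / (a : ℝ))
    (f : ℕ → ℂ) (C D : ℝ) (hC : 0 < C) (hD : 0 < D)
    (hf : ∀ r : ℕ, ‖f r‖ ≤ C * D ^ r * (((k + a * r).factorial : ℝ)) ^ (s - 1)) :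
    (∀ r : ℕ,
      (descPochhammer ℂ (b * (r + 1))).eval ((β - (b : ℂ) * (k : ℂ)) / (a : ℂ)) ≠ 0) ∧
    Summable fun r : ℕ => ‖
      (((k + a * r).factorial : ℂ) * f r /
        (descPochhammer ℂ (b * (r + 1))).eval ((β - (b : ℂ) * (k : ℂ)) / (a : ℂ)))‖ := by
  set α : ℂ := (β - (b : ℂ) * (k : ℂ)) / (a : ℂ) with hαdef
  have hαi : ∀ i : ℕ, α - (i : ℂ) ≠ 0 := fun i => sub_ne_zero.mpr (hβ i)
  have hne : ∀ n : ℕ, (descPochhammer ℂ n).eval α ≠ 0 := by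
    intro n
    rw [descPochhammer_eval_prod_aux]
    exact Finset.prod_ne_zero_iff.mpr fun i _ => hαi i
  refine ⟨fun r => hne _, ?_⟩
  have hb : 0 < b := lt_trans ha haltb
  have hbR : (0:ℝ) < b := by exact_mod_cast hb
  have haR : (0:ℝ) < a := by exact_mod_cast ha
  have hs0 : 0 ≤ s := le_trans zero_le_one hs1
  have hbas : (a : ℝ) * s < b := by
    have := (lt_div_iff₀ haR).mp hs2
    linarith [this]
  -- the majorant sequence
  set F : ℕ → ℝ := fun r => C * D ^ r * (((k + a * r).factorial : ℝ)) ^ s /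
      ‖(descPochhammer ℂ (b * (r + 1))).eval α‖ with hFdef
  have hPpos : ∀ n : ℕ, 0 < ‖(descPochhammer ℂ n).eval α‖ :=
    fun n => norm_pos_iff.mpr (hne n)
  have hFnonneg : ∀ r, 0 ≤ F r := by
    intro r
    exact div_nonneg (by positivity) (norm_nonneg _)
  -- comparison with the majorant
  have hcomp : ∀ r : ℕ, ‖
      ((k + a * r).factorial : ℂ) * f r / (descPochhammer ℂ (b * (r + 1))).eval α‖ ≤ F r := by
    intro r
    rw [norm_div, norm_mul, Complex.norm_natCast]
    show _ ≤ C * D ^ r * (((k + a * r).factorial : ℝ)) ^ s /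
      ‖(descPochhammer ℂ (b * (r + 1))).eval α‖
    have hfacpos : (0:ℝ) < ((k + a * r).factorial : ℝ) := by
      exact_mod_cast Nat.factorial_pos _
    have hkey : ((k + a * r).factorial : ℝ) * (((k + a * r).factorial : ℝ)) ^ (s - 1)
        = (((k + a * r).factorial : ℝ)) ^ s := by
      have h1 := Real.rpow_add hfacpos 1 (s - 1)
      rw [show (1:ℝ) + (s - 1) = s by ring, Real.rpow_one] at h1
      exact h1.symm
    refine div_le_div_of_nonneg_right ?_ (hPpos _).le
    calc ((k + a * r).factorial : ℝ) * ‖f r‖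
        ≤ ((k + a * r).factorial : ℝ) * (C * D ^ r * (((k + a * r).factorial : ℝ)) ^ (s - 1)) :=
          mul_le_mul_of_nonneg_left (hf r) hfacpos.le
      _ = C * D ^ r * (((k + a * r).factorial : ℝ) * (((k + a * r).factorial : ℝ)) ^ (s - 1)) := by
          ring
      _ = C * D ^ r * (((k + a * r).factorial : ℝ)) ^ s := by rw [hkey]
  refine Summable.of_nonneg_of_le (fun r => norm_nonneg _) hcomp ?_
  -- summability of the majorant via the ratio test
  apply summable_of_ratio_norm_eventually_le (r := 1/2) (by norm_num)
  -- eventual bounds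
  have hEv1 : ∀ᶠ r : ℕ in Filter.atTop, ‖α‖ ≤ (b:ℝ) * ((r:ℝ) + 1) / 2 := by
    have ht : Filter.Tendsto (fun r : ℕ => (b:ℝ) * ((r:ℝ) + 1) / 2) Filter.atTop Filter.atTop := by
      apply Filter.Tendsto.atTop_div_const (by norm_num : (0:ℝ) < 2)
      exact (Filter.tendsto_atTop_add_const_right _ 1 tendsto_natCast_atTop_atTop).const_mul_atTop hbR
    exact ht.eventually_ge_atTop _
  set K : ℝ := 2 * D * (((k + 2 * a : ℕ) : ℝ)) ^ ((a:ℝ) * s) / ((b:ℝ)/2) ^ b with hKdef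
  have hEv2 : ∀ᶠ r : ℕ in Filter.atTop, K ≤ ((r:ℝ) + 1) ^ ((b:ℝ) - (a:ℝ) * s) := by
    have ht : Filter.Tendsto (fun r : ℕ => ((r:ℝ) + 1) ^ ((b:ℝ) - (a:ℝ) * s))
        Filter.atTop Filter.atTop :=
      (tendsto_rpow_atTop (by linarith)).comp
        (Filter.tendsto_atTop_add_const_right _ 1 tendsto_natCast_atTop_atTop)
    exact ht.eventually_ge_atTop _
  filter_upwards [hEv1, hEv2] with r h1 h2
  have hrpos : (0:ℝ) < (r:ℝ) + 1 := by positivity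
  -- split the Pochhammer product
  have hQsplit : ‖(descPochhammer ℂ (b * (r + 1 + 1))).eval α‖
      = ‖(descPochhammer ℂ (b * (r + 1))).eval α‖ *
        ∏ j ∈ Finset.range b, ‖α - ((b * (r + 1) + j : ℕ) : ℂ)‖ := by
    rw [descPochhammer_eval_prod_aux, descPochhammer_eval_prod_aux,
      show b * (r + 1 + 1) = b * (r + 1) + b by ring, Finset.prod_range_add, norm_mul, norm_prod,
      norm_prod]
  set Q : ℝ := ∏ j ∈ Finset.range b, ‖α - ((b * (r + 1) + j : ℕ) : ℂ)‖ with hQdef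
  have hQge : ((b:ℝ) * ((r:ℝ) + 1) / 2) ^ b ≤ Q := by
    have hconst : ((b:ℝ) * ((r:ℝ) + 1) / 2) ^ b
        = ∏ _j ∈ Finset.range b, ((b:ℝ) * ((r:ℝ) + 1) / 2) := by
      rw [Finset.prod_const, Finset.card_range]
    rw [hQdef, hconst]
    apply Finset.prod_le_prod
    · intro i _; positivity
    · intro i _
      have h3 : ‖((b * (r + 1) + i : ℕ) : ℂ)‖ - ‖α‖
          ≤ ‖α - ((b * (r + 1) + i : ℕ) : ℂ)‖ := by
        rw [norm_sub_rev]
        exact norm_sub_norm_le _ _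
      rw [Complex.norm_natCast] at h3
      have h4 : ((b * (r + 1) + i : ℕ) : ℝ) = (b:ℝ) * ((r:ℝ) + 1) + i := by push_cast; ring
      rw [h4] at h3
      have h5 : (0:ℝ) ≤ (i:ℝ) := by positivity
      linarith
  have hQpos : 0 < Q := by
    rw [hQdef]
    exact Finset.prod_pos fun i _ => norm_pos_iff.mpr (hαi _)
  -- factorial bound
  have hMa : k + a * (r + 1) = (k + a * r) + a := by ring
  have hfact : (((k + a * (r + 1)).factorial : ℝ)) ^ s
      ≤ (((k + a * r).factorial : ℝ)) ^ s * (((k + a * (r + 1) : ℕ) : ℝ)) ^ ((a:ℝ) * s) := by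
    have h4 : ((k + a * (r + 1)).factorial : ℝ)
        ≤ ((k + a * r).factorial : ℝ) * (((k + a * (r + 1) : ℕ) : ℝ)) ^ (a : ℕ) := by
      have h5 := factorial_add_le_aux (k + a * r) a
      rw [← hMa] at h5
      exact_mod_cast h5
    calc (((k + a * (r + 1)).factorial : ℝ)) ^ s
        ≤ (((k + a * r).factorial : ℝ) * (((k + a * (r + 1) : ℕ) : ℝ)) ^ (a : ℕ)) ^ s :=
          Real.rpow_le_rpow (by positivity) h4 hs0
      _ = (((k + a * r).factorial : ℝ)) ^ s * ((((k + a * (r + 1) : ℕ) : ℝ)) ^ (a : ℕ)) ^ s :=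
          Real.mul_rpow (by positivity) (by positivity)
      _ = (((k + a * r).factorial : ℝ)) ^ s * (((k + a * (r + 1) : ℕ) : ℝ)) ^ ((a:ℝ) * s) := by
          rw [← Real.rpow_natCast (((k + a * (r + 1) : ℕ) : ℝ)) a, ← Real.rpow_mul (by positivity)]
  -- main quantitative bound
  have hKchain : 2 * D * (((k + a * (r + 1) : ℕ) : ℝ)) ^ ((a:ℝ) * s)
      ≤ ((b:ℝ) * ((r:ℝ) + 1) / 2) ^ b := by
    have hM' : (((k + a * (r + 1) : ℕ) : ℝ)) ≤ ((k + 2 * a : ℕ) : ℝ) * ((r:ℝ) + 1) := by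
      push_cast
      nlinarith [Nat.cast_nonneg (α := ℝ) k, Nat.cast_nonneg (α := ℝ) a,
        Nat.cast_nonneg (α := ℝ) r]
    have hM'2 : (((k + a * (r + 1) : ℕ) : ℝ)) ^ ((a:ℝ) * s)
        ≤ (((k + 2 * a : ℕ) : ℝ)) ^ ((a:ℝ) * s) * (((r:ℝ) + 1)) ^ ((a:ℝ) * s) := by
      rw [← Real.mul_rpow (by positivity) (by positivity)]
      exact Real.rpow_le_rpow (by positivity) hM' (by positivity)
    have e2 : ((b:ℝ) * ((r:ℝ) + 1) / 2) ^ b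
        = ((b:ℝ)/2) ^ b * (((r:ℝ) + 1) ^ ((a:ℝ) * s) * ((r:ℝ) + 1) ^ ((b:ℝ) - (a:ℝ) * s)) := by
      rw [← Real.rpow_add hrpos, show (a:ℝ)*s + ((b:ℝ) - (a:ℝ)*s) = ((b:ℕ):ℝ) by push_cast; ring,
        Real.rpow_natCast, show (b:ℝ) * ((r:ℝ) + 1) / 2 = ((b:ℝ)/2) * ((r:ℝ) + 1) by ring,
        mul_pow]
    rw [e2]
    have hG : (0:ℝ) < ((b:ℝ)/2) ^ b := by positivity
    have hKG : 2 * D * (((k + 2 * a : ℕ) : ℝ)) ^ ((a:ℝ) * s) ≤ ((b:ℝ)/2) ^ b * (((r:ℝ) + 1) ^ ((b:ℝ) - (a:ℝ) * s)) := by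
      rw [hKdef] at h2
      calc 2 * D * (((k + 2 * a : ℕ) : ℝ)) ^ ((a:ℝ) * s)
          = 2 * D * (((k + 2 * a : ℕ) : ℝ)) ^ ((a:ℝ) * s) / ((b:ℝ)/2) ^ b * ((b:ℝ)/2) ^ b := by
            field_simp
        _ ≤ (((r:ℝ) + 1) ^ ((b:ℝ) - (a:ℝ) * s)) * ((b:ℝ)/2) ^ b :=
            mul_le_mul_of_nonneg_right h2 hG.le
        _ = ((b:ℝ)/2) ^ b * (((r:ℝ) + 1) ^ ((b:ℝ) - (a:ℝ) * s)) := mul_comm _ _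
    calc 2 * D * (((k + a * (r + 1) : ℕ) : ℝ)) ^ ((a:ℝ) * s)
        ≤ 2 * D * ((((k + 2 * a : ℕ) : ℝ)) ^ ((a:ℝ) * s) * (((r:ℝ) + 1)) ^ ((a:ℝ) * s)) :=
          mul_le_mul_of_nonneg_left hM'2 (by positivity)
      _ = (2 * D * (((k + 2 * a : ℕ) : ℝ)) ^ ((a:ℝ) * s)) * (((r:ℝ) + 1)) ^ ((a:ℝ) * s) := by ring
      _ ≤ (((b:ℝ)/2) ^ b * (((r:ℝ) + 1) ^ ((b:ℝ) - (a:ℝ) * s))) * (((r:ℝ) + 1)) ^ ((a:ℝ) * s) :=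
          mul_le_mul_of_nonneg_right hKG (by positivity)
      _ = ((b:ℝ)/2) ^ b * (((r:ℝ) + 1) ^ ((a:ℝ) * s) * ((r:ℝ) + 1) ^ ((b:ℝ) - (a:ℝ) * s)) := by
          ring
  have key : 2 * D * (((k + a * (r + 1)).factorial : ℝ)) ^ s
      ≤ (((k + a * r).factorial : ℝ)) ^ s * Q := by
    calc 2 * D * (((k + a * (r + 1)).factorial : ℝ)) ^ s
        ≤ 2 * D * ((((k + a * r).factorial : ℝ)) ^ s *
            (((k + a * (r + 1) : ℕ) : ℝ)) ^ ((a:ℝ) * s)) :=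
          mul_le_mul_of_nonneg_left hfact (by positivity)
      _ = (((k + a * r).factorial : ℝ)) ^ s *
            (2 * D * (((k + a * (r + 1) : ℕ) : ℝ)) ^ ((a:ℝ) * s)) := by ring
      _ ≤ (((k + a * r).factorial : ℝ)) ^ s * (((b:ℝ) * ((r:ℝ) + 1) / 2) ^ b) :=
          mul_le_mul_of_nonneg_left hKchain (by positivity)
      _ ≤ (((k + a * r).factorial : ℝ)) ^ s * Q :=
          mul_le_mul_of_nonneg_left hQge (by positivity)
  -- assemble
  have hFnn1 := hFnonneg (r + 1)
  have hFnn0 := hFnonneg r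
  rw [Real.norm_of_nonneg hFnn1, Real.norm_of_nonneg hFnn0, hFdef]
  simp only []
  rw [hQsplit]
  set p : ℝ := ‖(descPochhammer ℂ (b * (r + 1))).eval α‖ with hpdef
  have hp : 0 < p := hPpos _
  rw [mul_div_assoc' (1/2 : ℝ), div_le_div_iff₀ (mul_pos hp hQpos) hp]
  have hmul := mul_le_mul_of_nonneg_left key (show (0:ℝ) ≤ C * D ^ r * p / 2 by positivity)
  calc C * D ^ (r + 1) * (((k + a * (r + 1)).factorial : ℝ)) ^ s * p
      = C * D ^ r * p / 2 * (2 * D * (((k + a * (r + 1)).factorial : ℝ)) ^ s) := by ring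
    _ ≤ C * D ^ r * p / 2 * ((((k + a * r).factorial : ℝ)) ^ s * Q) := hmul
    _ = 1 / 2 * (C * D ^ r * (((k + a * r).factorial : ℝ)) ^ s) * (p * Q) := by ring
end
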